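/- arXiv:2308.14218 — 6 statements merged into one kernel-verified Lean document; each statement's English description precedes it below -/
import Mathlib

section
/- Let 𝔪 = 𝔪₋₁ ⊕ 𝔪₋₂ be a step 2 fundamental graded Lie algebra over ℝ such that (1) dim 𝔪₋₂ ≤ 3, (2) dim 𝔪₋₂ < dim 𝔪₋₁, and (3) 𝔪₋₁ ∩ Z(𝔪) = 0. Then 𝔪 is ad-surjective, i.e., there exists X ∈ 𝔪₋₁ such that the linear map ad X : 𝔪₋₁ → 𝔪₋₂, Y ↦ ⁅X, Y⁆, is surjective. -/
open Module Submodule LinearMap Polynomial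

/-- Two vectors in a submodule of rank ≤ 1 are proportional. -/
lemma pair_dep {W : Type*} [AddCommGroup W] [Module ℝ W] [FiniteDimensional ℝ W]
    (s : Submodule ℝ W) (hs : finrank ℝ ↥s ≤ 1) {p q : W}
    (hp : p ∈ s) (hq : q ∈ s) (hp0 : p ≠ 0) : ∃ μ : ℝ, q = μ • p := by
  by_contra hq'
  push_neg at hq'
  have hli : LinearIndependent ℝ (![⟨q, hq⟩, ⟨p, hp⟩] : Fin 2 → ↥s) := by
    rw [linearIndependent_fin2]
    refine ⟨by simpa [Subtype.ext_iff] using hp0, fun a ha => ?_⟩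
    apply hq' a
    simpa [Subtype.ext_iff] using ha.symm
  have := hli.fintype_card_le_finrank
  simp [Fintype.card_fin] at this
  omega

/-- If `R` has rank ≤ 2 and contains a vector outside `U`, then `R ⊓ U` has rank ≤ 1. -/
lemma inter_le_one {W : Type*} [AddCommGroup W] [Module ℝ W] [FiniteDimensional ℝ W]
    (R U : Submodule ℝ W) {c : W} (hc : c ∈ R) (hcU : c ∉ U)
    (hR : finrank ℝ ↥R ≤ 2) : finrank ℝ ↥(R ⊓ U) ≤ 1 := by
  have hc0 : c ≠ 0 := fun h => hcU (h ▸ U.zero_mem)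
  have h1 : finrank ℝ ↥(span ℝ {c}) = 1 := finrank_span_singleton hc0
  have hdisj : (R ⊓ U) ⊓ span ℝ {c} = ⊥ := by
    rw [eq_bot_iff]
    rintro x ⟨⟨hxR, hxU⟩, hxc⟩
    obtain ⟨μ, rfl⟩ := mem_span_singleton.1 hxc
    rcases eq_or_ne μ 0 with h | h
    · simp [h]
    · exact absurd (by simpa [smul_smul, inv_mul_cancel₀ h] using U.smul_mem μ⁻¹ hxU) hcU
  have hsup : (R ⊓ U) ⊔ span ℝ {c} ≤ R :=
    sup_le inf_le_left (span_le.2 (by simpa using hc))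
  have hkey := Submodule.finrank_sup_add_finrank_inf_eq (R ⊓ U) (span ℝ {c})
  rw [hdisj] at hkey
  have hmono := Submodule.finrank_mono hsup
  simp [h1, finrank_bot] at hkey
  omega


/-- **Deformation lemma**: if `X₀` maximizes the rank of `B x`, then for every `Y` and
every `Z` in the kernel of `B X₀`, the vector `B Y Z` lies in the range of `B X₀`. -/
lemma deformation {V W : Type*} [AddCommGroup V] [Module ℝ V] [AddCommGroup W] [Module ℝ W]
    [FiniteDimensional ℝ V] [FiniteDimensional ℝ W]
    (B : V →ₗ[ℝ] V →ₗ[ℝ] W) (X₀ : V)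
    (hmax : ∀ x, finrank ℝ ↥(range (B x)) ≤ finrank ℝ ↥(range (B X₀)))
    (Y Z : V) (hZ : B X₀ Z = 0) : B Y Z ∈ range (B X₀) := by
  classical
  set U := range (B X₀) with hU
  by_contra hc
  set c := B Y Z with hcdef
  set r := finrank ℝ ↥U with hr
  let bU : Basis (Fin r) ℝ ↥U := Module.finBasis ℝ ↥U
  let a : Fin r → W := fun i => (bU i : W)
  have ha_li : LinearIndependent ℝ a := bU.linearIndependent.map' U.subtype U.ker_subtype
  have ha_mem : ∀ i, a i ∈ U := fun i => (bU i).2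
  have ha_span : span ℝ (Set.range a) ≤ U :=
    span_le.2 (by rintro _ ⟨i, rfl⟩; exact ha_mem i)
  have hsnoc : LinearIndependent ℝ (Fin.snoc a c : Fin (r + 1) → W) :=
    linearIndependent_fin_snoc.2 ⟨ha_li, fun hmem => hc (ha_span hmem)⟩
  set v' : Fin (r + 1) → W := Fin.snoc a c with hv'
  choose Zi hZi using fun i => (ha_mem i : a i ∈ range (B X₀))
  set bvec : Fin r → W := fun i => B Y (Zi i) with hbvec
  -- dual functionals
  have hs : LinearIndepOn ℝ id (Set.range v') := (linearIndepOn_id_range_iff hsnoc.injective).mpr hsnoc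
  let bW := Basis.extend hs
  have hinj : Function.Injective v' := hsnoc.injective
  let idx : Fin (r + 1) → ↑(hs.extend (Set.subset_univ _)) :=
    fun i => ⟨v' i, Basis.subset_extend hs ⟨i, rfl⟩⟩
  let φ : Fin (r + 1) → (W →ₗ[ℝ] ℝ) := fun i => bW.coord (idx i)
  have hφ : ∀ i j, φ i (v' j) = if i = j then 1 else 0 := by
    intro i j
    have h1 : v' j = bW (idx j) := (Basis.extend_apply_self hs (idx j)).symm
    rw [show φ i (v' j) = bW.coord (idx i) (v' j) from rfl, h1, Basis.coord_apply,
      Basis.repr_self, Finsupp.single_apply]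
    by_cases hij : i = j
    · subst hij; simp
    · have hne : idx j ≠ idx i := fun hco =>
        hij (hinj (congrArg Subtype.val hco)).symm
      rw [if_neg hne, if_neg hij]
  -- polynomial matrix
  set Mp : Matrix (Fin (r + 1)) (Fin (r + 1)) (Polynomial ℝ) :=
    Matrix.of fun i j => C (φ i ((Fin.snoc a c : Fin (r+1) → W) j)) + X * C (φ i ((Fin.snoc bvec 0 : Fin (r+1) → W) j))
    with hMp
  have heval : ∀ t : ℝ, (Polynomial.evalRingHom t).mapMatrix Mp =
      Matrix.of fun i j => φ i ((Fin.snoc (fun i => a i + t • bvec i) c : Fin (r + 1) → W) j) := by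
    intro t
    ext i j
    simp only [RingHom.mapMatrix_apply, Matrix.map_apply, hMp, Matrix.of_apply, eval_add,
      eval_mul, eval_C, eval_X, coe_evalRingHom]
    induction j using Fin.lastCases with
    | last => simp only [Fin.snoc_last, map_zero, mul_zero, add_zero]
    | cast jj =>
      simp only [Fin.snoc_castSucc, map_add, map_smul, smul_eq_mul]
  have hp0 : Polynomial.eval 0 Mp.det = 1 := by
    have hmd := RingHom.map_det (Polynomial.evalRingHom 0) Mp
    have h2 : (Polynomial.evalRingHom 0).mapMatrix Mp = 1 := by
      rw [heval 0]
      ext i j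
      have : (fun i => a i + (0:ℝ) • bvec i) = a := by funext i; simp
      rw [Matrix.of_apply, this, ← hv', hφ, Matrix.one_apply]
    simpa [h2] using hmd
  have hpne : Mp.det ≠ 0 := fun hdet => by simp [hdet] at hp0
  have hfin : ({t : ℝ | Mp.det.IsRoot t} ∪ {0}).Finite :=
    (Polynomial.finite_setOf_isRoot hpne).union (Set.finite_singleton 0)
  obtain ⟨t, ht⟩ := hfin.infinite_compl.nonempty
  rw [Set.mem_compl_iff, Set.mem_union] at ht
  push_neg at ht
  obtain ⟨htroot, ht0'⟩ := ht
  have ht0 : t ≠ 0 := by simpa using ht0'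
  set u : Fin (r + 1) → W := Fin.snoc (fun i => a i + t • bvec i) c with hu
  set M : Matrix (Fin (r+1)) (Fin (r+1)) ℝ := (Polynomial.evalRingHom t).mapMatrix Mp with hM
  have hdet : M.det ≠ 0 := by
    rw [hM, ← RingHom.map_det]
    simpa using htroot
  have hMapply : ∀ i j, M i j = φ i (u j) := by
    intro i j; rw [hM, heval t]; rfl
  have hu_li : LinearIndependent ℝ u := by
    rw [Fintype.linearIndependent_iff]
    intro g hg
    have hmv : M.mulVec g = 0 := by
      funext i
      have h3 : φ i (∑ j, g j • u j) = 0 := by rw [hg]; simp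
      rw [map_sum] at h3
      simp only [map_smul, smul_eq_mul] at h3
      simp only [Matrix.mulVec, dotProduct, Pi.zero_apply]
      calc ∑ j, M i j * g j = ∑ j, g j * φ i (u j) := by
            refine Finset.sum_congr rfl fun j _ => ?_
            rw [hMapply i j, mul_comm]
        _ = 0 := h3
    have := Matrix.eq_zero_of_mulVec_eq_zero hdet hmv
    exact fun i => congrFun this i
  set X' := X₀ + t • Y with hX'
  have hBX' : ∀ z, B X' z = B X₀ z + t • B Y z := by
    intro z; rw [hX', map_add, map_smul]; rfl
  have hmemu : ∀ j, u j ∈ range (B X') := by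
    intro j
    induction j using Fin.lastCases with
    | last =>
      have h4 : B X' Z = t • c := by rw [hBX', hZ, zero_add, hcdef]
      have h5 : (t⁻¹ : ℝ) • (B X' Z) ∈ range (B X') :=
        Submodule.smul_mem _ _ ⟨Z, rfl⟩
      rw [h4, smul_smul, inv_mul_cancel₀ ht0, one_smul] at h5
      simpa [hu, Fin.snoc_last] using h5
    | cast i =>
      refine ⟨Zi i, ?_⟩
      rw [hBX', hZi i]
      simp [hu, Fin.snoc_castSucc, hbvec]
  let u'' : Fin (r + 1) → ↥(range (B X')) := fun j => ⟨u j, hmemu j⟩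
  have hu''_li : LinearIndependent ℝ u'' := by
    apply LinearIndependent.of_comp (range (B X')).subtype
    have : (range (B X')).subtype ∘ u'' = u := by funext j; rfl
    rw [this]; exact hu_li
  have hcard := hu''_li.fintype_card_le_finrank
  have hle := hmax X'
  simp [Fintype.card_fin] at hcard
  omega

/-- Abstract main lemma about alternating bilinear maps. -/
theorem main_bilinear {V W : Type*} [AddCommGroup V] [Module ℝ V] [AddCommGroup W] [Module ℝ W]
    [FiniteDimensional ℝ V] [FiniteDimensional ℝ W]
    (B : V →ₗ[ℝ] V →ₗ[ℝ] W)
    (halt : ∀ x, B x x = 0)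
    (hspan : ∀ z : W, z ∈ span ℝ {z : W | ∃ x y, B x y = z})
    (hnd : ∀ x, (∀ y, B x y = 0) → x = 0)
    (hk3 : finrank ℝ W ≤ 3)
    (hdim : finrank ℝ W < finrank ℝ V) :
    ∃ x, Function.Surjective (B x) := by
  classical
  have hskew : ∀ x y, B x y = - B y x := by
    intro x y
    have h0 := halt (x + y)
    simp only [map_add, LinearMap.add_apply, halt, zero_add, add_zero] at h0
    exact eq_neg_of_add_eq_zero_right h0
  by_contra hsur
  push_neg at hsur
  have hrk : ∀ x, finrank ℝ ↥(range (B x)) < finrank ℝ W := by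
    intro x
    exact Submodule.finrank_lt (lt_top_iff_ne_top.2 fun htop => hsur x (range_eq_top.1 htop)).ne
  set S : Set ℕ := {m | ∃ x : V, finrank ℝ ↥(range (B x)) = m} with hS
  have hSne : S.Nonempty := ⟨_, 0, rfl⟩
  have hSbdd : BddAbove S := ⟨finrank ℝ W, by rintro m ⟨x, rfl⟩; exact (hrk x).le⟩
  obtain ⟨X₀, hX₀⟩ := Nat.sSup_mem hSne hSbdd
  have hmax : ∀ x, finrank ℝ ↥(range (B x)) ≤ finrank ℝ ↥(range (B X₀)) := by
    intro x
    rw [hX₀]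
    exact le_csSup hSbdd ⟨x, rfl⟩
  set U := range (B X₀) with hU
  have hA : ∀ Y Z, B X₀ Z = 0 → B Y Z ∈ U := fun Y Z hZ => deformation B X₀ hmax Y Z hZ
  have hAl : ∀ Y Z, B X₀ Z = 0 → B Z Y ∈ U := fun Y Z hZ => by
    rw [hskew]; exact U.neg_mem (hA Y Z hZ)
  have hKX₀ : ∀ z, B X₀ z = 0 → B z X₀ = 0 := fun z hz => by rw [hskew, hz, neg_zero]
  have hrX₀ : finrank ℝ ↥U < finrank ℝ W := hrk X₀
  have hcases : finrank ℝ ↥U = 0 ∨ finrank ℝ ↥U = 1 ∨ finrank ℝ ↥U = 2 := by omega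
  rcases hcases with hr0 | hr1 | hr2
  -- rank 0
  · have hVpos : 0 < finrank ℝ V := by omega
    have : Nontrivial V := Module.finrank_pos_iff.1 hVpos
    obtain ⟨x, hx⟩ := exists_ne (0 : V)
    refine hx (hnd x fun y => ?_)
    have h1 : finrank ℝ ↥(range (B x)) = 0 :=
      le_antisymm (by rw [← hr0]; exact hmax x) (Nat.zero_le _)
    have h2 : range (B x) = ⊥ := Submodule.finrank_eq_zero.1 h1
    have h3 : B x y ∈ range (B x) := ⟨y, rfl⟩
    rw [h2] at h3
    simpa using h3
  -- rank 1
  · obtain ⟨bU⟩ : Nonempty (Basis (Fin 1) ℝ ↥U) := ⟨finBasisOfFinrankEq ℝ ↥U hr1⟩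
    set e1 : W := (bU 0 : W) with he1def
    have he1U : e1 ∈ U := (bU 0).2
    have hUle : U ≤ span ℝ {e1} := by
      intro u hu
      have hrepr := bU.sum_repr ⟨u, hu⟩
      rw [Fin.sum_univ_one] at hrepr
      refine mem_span_singleton.2 ⟨bU.repr ⟨u, hu⟩ 0, ?_⟩
      calc (bU.repr ⟨u, hu⟩ 0) • e1 = ((bU.repr ⟨u, hu⟩ 0 • bU 0 : ↥U) : W) := rfl
        _ = u := by rw [hrepr]
    obtain ⟨v, hv⟩ := LinearMap.mem_range.mp he1U
    have hdec : ∀ x : V, ∃ aa : ℝ, B X₀ (x - aa • v) = 0 := by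
      intro x
      obtain ⟨aa, haa⟩ := mem_span_singleton.1 (hUle ⟨x, rfl⟩)
      exact ⟨aa, by rw [map_sub, map_smul, hv, haa, sub_self]⟩
    have htop : span ℝ {z : W | ∃ x y, B x y = z} ≤ U := by
      refine span_le.2 ?_
      rintro _ ⟨x, y, rfl⟩
      obtain ⟨a, hzx⟩ := hdec x
      obtain ⟨a', hzy⟩ := hdec y
      have hx' : x = a • v + (x - a • v) := by abel
      have hexp : B x y = a • B v y + B (x - a • v) y := by
        conv_lhs => rw [hx']
        rw [map_add, map_smul]
        rfl
      rw [hexp]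
      have hBvy : B v y ∈ U := by
        have hy' : y = a' • v + (y - a' • v) := by abel
        have : B v y = a' • B v v + B v (y - a' • v) := by
          conv_lhs => rw [hy']
          rw [map_add, map_smul]
        rw [this, halt]
        exact U.add_mem (by simp) (hA v _ hzy)
      exact U.add_mem (U.smul_mem _ hBvy) (hAl y _ hzx)
    have hUtop : U = ⊤ := by
      rw [eq_top_iff]
      exact fun z _ => htop (hspan z)
    have h2W : 1 < finrank ℝ W := by omega
    rw [hUtop, finrank_top] at hr1
    omega
  -- rank 2, so finrank W = 3
  · have hk : finrank ℝ W = 3 := by omega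
    obtain ⟨bU⟩ : Nonempty (Basis (Fin 2) ℝ ↥U) := ⟨finBasisOfFinrankEq ℝ ↥U hr2⟩
    set e1 : W := (bU 0 : W) with he1def
    set e2 : W := (bU 1 : W) with he2def
    have he1U : e1 ∈ U := (bU 0).2
    have he2U : e2 ∈ U := (bU 1).2
    have hcoef : ∀ x y : ℝ, x • e1 + y • e2 = 0 → x = 0 ∧ y = 0 := by
      intro x y hxy
      have hli : LinearIndependent ℝ (fun i : Fin 2 => ((bU i : W))) :=
        bU.linearIndependent.map' U.subtype U.ker_subtype
      have h0 := Fintype.linearIndependent_iff.1 hli ![x, y] (by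
        rw [Fin.sum_univ_two]
        simpa using hxy)
      exact ⟨h0 0, h0 1⟩
    have he1 : e1 ≠ 0 := fun h => by
      have := (hcoef 1 0 (by rw [h]; simp)).1; norm_num at this
    have h12 : e1 + e2 ≠ 0 := fun h => by
      have := (hcoef 1 1 (by simpa using h)).1; norm_num at this
    have hspan12 : ∀ q : W, q ∈ span ℝ ({e1} : Set W) → q ∈ span ℝ ({e2} : Set W) → q = 0 := by
      intro q h1 h2
      obtain ⟨α, rfl⟩ := mem_span_singleton.1 h1
      obtain ⟨β, hβ⟩ := mem_span_singleton.1 h2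
      have := (hcoef α (-β) (by rw [neg_smul, ← hβ]; abel)).1
      rw [this, zero_smul]
    have hUle : U ≤ span ℝ ({e1, e2} : Set W) := by
      intro u hu
      have hrepr := bU.sum_repr ⟨u, hu⟩
      rw [Fin.sum_univ_two] at hrepr
      refine mem_span_pair.2 ⟨bU.repr ⟨u, hu⟩ 0, bU.repr ⟨u, hu⟩ 1, ?_⟩
      calc bU.repr ⟨u, hu⟩ 0 • e1 + bU.repr ⟨u, hu⟩ 1 • e2
          = ((bU.repr ⟨u, hu⟩ 0 • bU 0 + bU.repr ⟨u, hu⟩ 1 • bU 1 : ↥U) : W) := rfl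
        _ = u := by rw [hrepr]
    obtain ⟨v, hv⟩ := LinearMap.mem_range.mp he1U
    obtain ⟨w, hw⟩ := LinearMap.mem_range.mp he2U
    have hBvX₀ : B v X₀ = -e1 := by rw [hskew, hv]
    have hBwX₀ : B w X₀ = -e2 := by rw [hskew, hw]
    have hdec : ∀ x : V, ∃ aa bb : ℝ, B X₀ (x - aa • v - bb • w) = 0 := by
      intro x
      obtain ⟨aa, bb, hab⟩ := mem_span_pair.1 (hUle ⟨x, rfl⟩)
      refine ⟨aa, bb, ?_⟩
      rw [map_sub, map_sub, map_smul, map_smul, hv, hw, ← hab]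
      abel
    have hexp : ∀ x y : V, ∀ a b : ℝ, B x y =
        a • B v y + b • B w y + B (x - a • v - b • w) y := by
      intro x y a b
      have hx' : x = a • v + b • w + (x - a • v - b • w) := by abel
      conv_lhs => rw [hx']
      rw [map_add, map_add, map_smul, map_smul]
      rfl
    have hexp2 : ∀ x y : V, ∀ a b : ℝ, B x y =
        a • B x v + b • B x w + B x (y - a • v - b • w) := by
      intro x y a b
      have hy' : y = a • v + b • w + (y - a • v - b • w) := by abel
      conv_lhs => rw [hy']
      rw [map_add, map_add, map_smul, map_smul]
    -- a helper for second-slot membership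
    have hsecond : ∀ (T : Submodule ℝ W) (x : V), B x v ∈ T → B x w ∈ T →
        (∀ z, B X₀ z = 0 → B x z ∈ T) → ∀ y, B x y ∈ T := by
      intro T x h1 h2 h3 y
      obtain ⟨a, b, hzy⟩ := hdec y
      rw [hexp2 x y a b]
      exact T.add_mem (T.add_mem (T.smul_mem _ h1) (T.smul_mem _ h2)) (h3 _ hzy)
    -- B v w ∉ U
    have he3 : B v w ∉ U := by
      intro he3mem
      have hall : ∀ x y : V, B x y ∈ U := by
        intro x y
        obtain ⟨a, b, hzx⟩ := hdec x
        rw [hexp x y a b]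
        refine U.add_mem (U.add_mem (U.smul_mem _ ?_) (U.smul_mem _ ?_)) ?_
        · exact hsecond U v (by rw [halt]; exact U.zero_mem) he3mem (fun z hz => hA v z hz) y
        · refine hsecond U w ?_ (by rw [halt]; exact U.zero_mem) (fun z hz => hA w z hz) y
          rw [hskew]
          exact U.neg_mem he3mem
        · exact hsecond U _ (hAl v _ hzx) (hAl w _ hzx) (fun z hz => hA _ z hz) y
      have hUtop : U = ⊤ := by
        rw [eq_top_iff]
        refine fun z _ => (span_le.2 ?_) (hspan z)
        rintro _ ⟨x, y, rfl⟩
        exact hall x y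
      rw [hUtop, finrank_top] at hr2
      omega
    -- the key step using rank ≤ 2
    have hstep : ∀ (X' u₀ : V), B X' u₀ ∉ U → ∀ p q : W, p ∈ range (B X') → p ∈ U →
        p ≠ 0 → q ∈ range (B X') → q ∈ U → ∃ μ : ℝ, q = μ • p := by
      intro X' u₀ hout p q hpR hpU hp0 hqR hqU
      have hrk2 : finrank ℝ ↥(range (B X')) ≤ 2 := by
        have := hrk X'; omega
      have hint := inter_le_one (range (B X')) U ⟨u₀, rfl⟩ hout hrk2
      exact pair_dep _ hint (mem_inf.2 ⟨hpR, hpU⟩) (mem_inf.2 ⟨hqR, hqU⟩) hp0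
    -- (α)
    have halpha : ∀ z, B X₀ z = 0 → B v z ∈ span ℝ ({e1} : Set W) := by
      intro z hz
      obtain ⟨μ, hμ⟩ := hstep v w he3 (-e1) (B v z) ⟨X₀, hBvX₀⟩ (U.neg_mem he1U)
        (neg_ne_zero.2 he1) ⟨z, rfl⟩ (hA v z hz)
      exact mem_span_singleton.2 ⟨-μ, by rw [hμ, smul_neg, neg_smul]⟩
    -- (β)
    have he2' : e2 ≠ 0 := fun h => by
      have := (hcoef 0 1 (by rw [h]; simp)).2; norm_num at this
    have hbeta : ∀ z, B X₀ z = 0 → B w z ∈ span ℝ ({e2} : Set W) := by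
      intro z hz
      have houtv : B w v ∉ U := fun hm => he3 (by
        have : B v w = -(B w v) := hskew v w
        rw [this]
        exact U.neg_mem hm)
      obtain ⟨μ, hμ⟩ := hstep w v houtv (-e2) (B w z) ⟨X₀, hBwX₀⟩ (U.neg_mem he2U)
        (neg_ne_zero.2 he2') ⟨z, rfl⟩ (hA w z hz)
      exact mem_span_singleton.2 ⟨-μ, by rw [hμ, smul_neg, neg_smul]⟩
    -- (γ) and (δ)
    have hBadd : ∀ (p q y : V), B (p + q) y = B p y + B q y := by
      intro p q y
      rw [map_add]
      rfl
    have hgamma : ∀ zx zy, B X₀ zx = 0 → B X₀ zy = 0 →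
        B zx zy ∈ span ℝ ({e1} : Set W) := by
      intro zx zy hzx hzy
      have houtw : B (v + zx) w ∉ U := fun hm => he3 (by
        have h5 : B v w = B (v + zx) w - B zx w := by rw [hBadd]; abel
        rw [h5]
        exact U.sub_mem hm (hAl w zx hzx))
      have hpeq : B (v + zx) X₀ = -e1 := by
        rw [hBadd, hBvX₀, hKX₀ zx hzx, add_zero]
      have hqU : B (v + zx) zy ∈ U := by
        rw [hBadd]
        exact U.add_mem (hA v zy hzy) (hA zx zy hzy)
      obtain ⟨μ, hμ⟩ := hstep (v + zx) w houtw (-e1) (B (v + zx) zy) ⟨X₀, hpeq⟩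
        (U.neg_mem he1U) (neg_ne_zero.2 he1) ⟨zy, rfl⟩ hqU
      have h6 : B zx zy = B (v + zx) zy - B v zy := by rw [hBadd]; abel
      rw [h6, hμ]
      exact sub_mem (mem_span_singleton.2 ⟨-μ, by rw [smul_neg, neg_smul]⟩) (halpha zy hzy)
    have hdelta : ∀ zx zy, B X₀ zx = 0 → B X₀ zy = 0 →
        B zx zy ∈ span ℝ ({e2} : Set W) := by
      intro zx zy hzx hzy
      have houtv : B (w + zx) v ∉ U := fun hm => he3 (by
        have h5 : B v w = -(B (w + zx) v - B zx v) := by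
          rw [hBadd, hskew w v]
          abel
        rw [h5]
        exact U.neg_mem (U.sub_mem hm (hAl v zx hzx)))
      have hpeq : B (w + zx) X₀ = -e2 := by
        rw [hBadd, hBwX₀, hKX₀ zx hzx, add_zero]
      have hqU : B (w + zx) zy ∈ U := by
        rw [hBadd]
        exact U.add_mem (hA w zy hzy) (hA zx zy hzy)
      obtain ⟨μ, hμ⟩ := hstep (w + zx) v houtv (-e2) (B (w + zx) zy) ⟨X₀, hpeq⟩
        (U.neg_mem he2U) (neg_ne_zero.2 he2') ⟨zy, rfl⟩ hqU
      have h6 : B zx zy = B (w + zx) zy - B w zy := by rw [hBadd]; abel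
      rw [h6, hμ]
      exact sub_mem (mem_span_singleton.2 ⟨-μ, by rw [smul_neg, neg_smul]⟩) (hbeta zy hzy)
    have hKK : ∀ zx zy, B X₀ zx = 0 → B X₀ zy = 0 → B zx zy = 0 := fun zx zy h1 h2 =>
      hspan12 _ (hgamma zx zy h1 h2) (hdelta zx zy h1 h2)
    -- (ζ)
    have hfg : ∀ z, B X₀ z = 0 → ∃ μ : ℝ, B v z = μ • e1 ∧ B w z = μ • e2 := by
      intro z hz
      have hout : B (v + w) v ∉ U := fun hm => he3 (by
        have h5 : B v w = -(B (v + w) v) := by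
          rw [hBadd, halt, hskew w v]
          abel
        rw [h5]
        exact U.neg_mem hm)
      have hpeq : B (v + w) X₀ = -(e1 + e2) := by
        rw [hBadd, hBvX₀, hBwX₀]
        abel
      have hqU : B (v + w) z ∈ U := by
        rw [hBadd]
        exact U.add_mem (hA v z hz) (hA w z hz)
      obtain ⟨μ, hμ⟩ := hstep (v + w) v hout (-(e1 + e2)) (B (v + w) z) ⟨X₀, hpeq⟩
        (U.neg_mem (U.add_mem he1U he2U)) (neg_ne_zero.2 h12) ⟨z, rfl⟩ hqU
      obtain ⟨α, hα⟩ := mem_span_singleton.1 (halpha z hz)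
      obtain ⟨β, hβ⟩ := mem_span_singleton.1 (hbeta z hz)
      have hsum : (α + μ) • e1 + (β + μ) • e2 = 0 := by
        have h7 : B v z + B w z = μ • -(e1 + e2) := by rw [← hBadd, hμ]
        rw [← hα, ← hβ] at h7
        rw [add_smul, add_smul]
        rw [smul_neg, smul_add] at h7
        have h8 : α • e1 + β • e2 + (μ • e1 + μ • e2) = 0 := by
          rw [h7]; abel
        calc α • e1 + μ • e1 + (β • e2 + μ • e2)
            = α • e1 + β • e2 + (μ • e1 + μ • e2) := by abel
          _ = 0 := h8
      obtain ⟨h9, h10⟩ := hcoef _ _ hsum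
      refine ⟨α, hα.symm, ?_⟩
      have : β = α := by linarith
      rw [← hβ, this]
    -- finish : find a central element
    have hker := finrank_range_add_finrank_ker (B X₀)
    rw [← hU] at hker
    have hKm2 : 2 ≤ finrank ℝ ↥(LinearMap.ker (B X₀)) := by omega
    obtain ⟨Z, hZK, hZns⟩ : ∃ z ∈ LinearMap.ker (B X₀), z ∉ span ℝ ({X₀} : Set V) := by
      by_contra hcon
      push_neg at hcon
      have hle : LinearMap.ker (B X₀) ≤ span ℝ ({X₀} : Set V) := hcon
      have hm := Submodule.finrank_mono hle
      have hsp : finrank ℝ ↥(span ℝ ({X₀} : Set V)) ≤ 1 := by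
        rcases eq_or_ne X₀ 0 with h | h
        · rw [h, Submodule.span_zero_singleton]
          simp
        · rw [finrank_span_singleton h]
      omega
    have hZ : B X₀ Z = 0 := mem_ker.1 hZK
    obtain ⟨μ, hμ1, hμ2⟩ := hfg Z hZ
    set Z' := Z + μ • X₀ with hZ'def
    have hZ'ker : B X₀ Z' = 0 := by
      rw [hZ'def, map_add, map_smul, hZ, halt]
      simp
    have hBvZ' : B v Z' = 0 := by
      rw [hZ'def, map_add, map_smul, hμ1, hBvX₀, smul_neg]
      abel
    have hBwZ' : B w Z' = 0 := by
      rw [hZ'def, map_add, map_smul, hμ2, hBwX₀, smul_neg]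
      abel
    have hKZ' : ∀ z, B X₀ z = 0 → B z Z' = 0 := by
      intro z hz
      rw [hZ'def, map_add, map_smul, hKK z Z hz hZ, hKX₀ z hz]
      simp
    have hforall : ∀ y, B Z' y = 0 := by
      intro y
      rw [hskew]
      suffices h : B y Z' = 0 by rw [h, neg_zero]
      obtain ⟨a, b, hzy⟩ := hdec y
      rw [hexp y Z' a b, hBvZ', hBwZ', hKZ' _ hzy]
      simp
    have hZ'0 : Z' = 0 := hnd Z' hforall
    apply hZns
    refine mem_span_singleton.2 ⟨-μ, ?_⟩
    have : Z = -(μ • X₀) := by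
      rw [hZ'def] at hZ'0
      linear_combination (norm := abel) hZ'0
    rw [neg_smul, ← this]

section Glue

open Module Submodule LinearMap

/-- A *step 2 fundamental graded Lie algebra* structure on a real Lie algebra `L`:
a direct sum decomposition `L = m1 ⊕ m2` with `⁅m1, m1⁆ = m2`, `⁅m1, m2⁆ = 0` and
`⁅m2, m2⁆ = 0`. -/
structure IsStep2FGLA (L : Type*) [LieRing L] [LieAlgebra ℝ L]
    (m1 m2 : Submodule ℝ L) : Prop where
  compl : IsCompl m1 m2
  span_brackets : m2 = Submodule.span ℝ {z : L | ∃ x ∈ m1, ∃ y ∈ m1, ⁅x, y⁆ = z}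
  bracket_m1_m2 : ∀ x ∈ m1, ∀ y ∈ m2, ⁅x, y⁆ = 0
  bracket_m2_m2 : ∀ x ∈ m2, ∀ y ∈ m2, ⁅x, y⁆ = 0

/-- If `dim 𝔪₋₂ ≤ 3`, `dim 𝔪₋₂ < dim 𝔪₋₁` and `𝔪₋₁` meets the center of `𝔪`
trivially, then the step 2 fundamental graded Lie algebra `𝔪 = 𝔪₋₁ ⊕ 𝔪₋₂` is
ad-surjective: there is `X ∈ 𝔪₋₁` with `ad X : 𝔪₋₁ → 𝔪₋₂` surjective. -/
theorem adSurjective_of_dim_le_three (L : Type*) [LieRing L] [LieAlgebra ℝ L]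
    [FiniteDimensional ℝ L] (m1 m2 : Submodule ℝ L)
    (h : IsStep2FGLA L m1 m2)
    (hdim3 : Module.finrank ℝ ↥m2 ≤ 3)
    (hdim : Module.finrank ℝ ↥m2 < Module.finrank ℝ ↥m1)
    (hcenter : ∀ x ∈ m1, (∀ y : L, ⁅x, y⁆ = 0) → x = 0) :
    ∃ X ∈ m1, ∀ z ∈ m2, ∃ Y ∈ m1, ⁅X, Y⁆ = z := by
  classical
  have hbr : ∀ (x y : ↥m1), ⁅(x : L), (y : L)⁆ ∈ m2 := fun x y => by
    rw [h.span_brackets]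
    exact Submodule.subset_span ⟨x, x.2, y, y.2, rfl⟩
  let Bm : ↥m1 →ₗ[ℝ] ↥m1 →ₗ[ℝ] ↥m2 :=
    LinearMap.mk₂ ℝ (fun x y => ⟨⁅(x : L), (y : L)⁆, hbr x y⟩)
      (fun x x' y => Subtype.ext (by simp [add_lie]))
      (fun c x y => Subtype.ext (by simp [smul_lie]))
      (fun x y y' => Subtype.ext (by simp [lie_add]))
      (fun c x y => Subtype.ext (by simp [lie_smul]))
  have hBm : ∀ x y : ↥m1, (Bm x y : L) = ⁅(x : L), (y : L)⁆ := fun x y => rfl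
  have halt : ∀ x, Bm x x = 0 := fun x => Subtype.ext (by simp [hBm])
  have hspan : ∀ z : ↥m2, z ∈ span ℝ {p : ↥m2 | ∃ x y, Bm x y = p} := by
    intro z
    have hle : m2 ≤ Submodule.map m2.subtype (span ℝ {p : ↥m2 | ∃ x y, Bm x y = p}) := by
      conv_lhs => rw [h.span_brackets]
      refine span_le.2 ?_
      rintro _ ⟨x, hx, y, hy, rfl⟩
      exact ⟨Bm ⟨x, hx⟩ ⟨y, hy⟩, Submodule.subset_span ⟨⟨x, hx⟩, ⟨y, hy⟩, rfl⟩, rfl⟩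
    obtain ⟨p, hp, hpz⟩ := hle z.2
    have hpz' : p = z := Subtype.ext hpz
    rwa [← hpz']
  have hnd : ∀ x : ↥m1, (∀ y, Bm x y = 0) → x = 0 := by
    intro x hx
    have hxL : (x : L) = 0 := by
      refine hcenter x x.2 fun y => ?_
      obtain ⟨y1, y2, hy1, hy2, hsum⟩ :=
        Submodule.codisjoint_iff_exists_add_eq.mp h.compl.codisjoint y
      rw [← hsum, lie_add]
      have h1 : ⁅(x : L), y1⁆ = 0 := by
        have h2 := congrArg Subtype.val (hx ⟨y1, hy1⟩)
        simpa [hBm] using h2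
      rw [h1, h.bracket_m1_m2 x x.2 y2 hy2, add_zero]
    exact Subtype.ext (by simpa using hxL)
  obtain ⟨x, hxs⟩ := main_bilinear Bm halt hspan hnd hdim3 hdim
  refine ⟨x, x.2, fun z hz => ?_⟩
  obtain ⟨y, hy⟩ := hxs ⟨z, hz⟩
  exact ⟨y, y.2, by simpa [hBm] using congrArg Subtype.val hy⟩

end Glue
end

section
/- Let 𝔪 = 𝔪₋₁ ⊕ 𝔪₋₂ be a step 2 fundamental graded Lie algebra over ℝ with dim 𝔪₋₂ ≤ 3 and 𝔪₋₁ ∩ Z(𝔪) = 0. If 𝔪 is NOT ad-surjective, then dim 𝔪₋₁ = 3, dim 𝔪₋₂ = 3, and the Lie bracket induces a linear isomorphism from the second exterior power Λ²(𝔪₋₁) onto 𝔪₋₂; that is, 𝔪 is (isomorphic to) the truncated step 2 free nilpotent Lie algebra with 3 generators. -/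
set_option linter.unusedSectionVars false
set_option maxHeartbeats 1000000
set_option maxRecDepth 10000

open Module Submodule
section auxlin
variable {V : Type*} [AddCommGroup V] [Module ℝ V]

lemma aux_pair_mem_span {v w : V} (hdep : ¬ LinearIndependent ℝ ![v, w]) (hw : w ≠ 0) :
    v ∈ Submodule.span ℝ {w} := by
  rw [linearIndependent_fin2] at hdep
  simp only [Matrix.cons_val_zero, Matrix.cons_val_one, Matrix.head_cons] at hdep
  push_neg at hdep
  obtain ⟨a, ha⟩ := hdep hw
  rw [Submodule.mem_span_singleton]
  exact ⟨a, ha⟩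

lemma aux_pair_indep {v w : V} (hv : v ≠ 0) (hw : w ∉ Submodule.span ℝ {v}) :
    LinearIndependent ℝ ![v, w] := by
  rw [linearIndependent_fin2]
  simp only [Matrix.cons_val_zero, Matrix.cons_val_one, Matrix.head_cons]
  constructor
  · rintro rfl; exact hw (Submodule.zero_mem _)
  · intro a hva
    rcases eq_or_ne a 0 with rfl | ha
    · simp at hva; exact hv hva.symm
    · exact hw (Submodule.mem_span_singleton.2 ⟨a⁻¹, by rw [← hva, smul_smul, inv_mul_cancel₀ ha, one_smul]⟩)

lemma aux_coeffs {v w : V} (h : LinearIndependent ℝ ![v, w]) {a b : ℝ}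
    (hab : a • v + b • w = 0) : a = 0 ∧ b = 0 := by
  have := Fintype.linearIndependent_iff.1 h ![a, b] (by
    simpa [Fin.sum_univ_two] using hab)
  exact ⟨this 0, this 1⟩

lemma aux_dep3 [FiniteDimensional ℝ V] {S : Submodule ℝ V} (hS : finrank ℝ S ≤ 2)
    {a b c : V} (ha : a ∈ S) (hb : b ∈ S) (hc : c ∈ S) :
    ¬ LinearIndependent ℝ ![a, b, c] := by
  intro hli
  have hcomp : (S.subtype) ∘ (![⟨a, ha⟩, ⟨b, hb⟩, ⟨c, hc⟩] : Fin 3 → S) = ![a, b, c] := by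
    funext i; fin_cases i <;> rfl
  have hli' : LinearIndependent ℝ (![⟨a, ha⟩, ⟨b, hb⟩, ⟨c, hc⟩] : Fin 3 → S) :=
    LinearIndependent.of_comp S.subtype (hcomp ▸ hli)
  have h3 := hli'.fintype_card_le_finrank
  simp at h3
  omega

lemma aux_range_pair (v w : V) : Set.range ![v, w] = {v, w} := by
  ext x
  simp [Fin.exists_fin_two]
  tauto

end auxlin
section lemA
variable {L : Type*} [LieRing L] [LieAlgebra ℝ L] [FiniteDimensional ℝ L]
  (m1 m2 : Submodule ℝ L)

/-- Key lemma (polynomial/determinant argument): if `ad X` has two independent values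
`⁅X,u₁⁆, ⁅X,u₂⁆`, every `ad` has "rank ≤ 2", and `⁅X,Z⁆ = 0`, then all brackets with `Z`
lie in the plane spanned by `⁅X,u₁⁆, ⁅X,u₂⁆`. -/
lemma lemmaA
    (hdim3 : finrank ℝ m2 ≤ 3)
    (hm2b : ∀ x ∈ m1, ∀ y ∈ m1, ⁅x, y⁆ ∈ m2)
    (hrank : ∀ x ∈ m1, ∀ y1 ∈ m1, ∀ y2 ∈ m1, ∀ y3 ∈ m1,
      ¬ LinearIndependent ℝ ![⁅x, y1⁆, ⁅x, y2⁆, ⁅x, y3⁆])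
    {X u₁ u₂ Z Y : L} (hX : X ∈ m1) (hu₁ : u₁ ∈ m1) (hu₂ : u₂ ∈ m1)
    (hZm : Z ∈ m1) (hY : Y ∈ m1)
    (hp : LinearIndependent ℝ ![⁅X, u₁⁆, ⁅X, u₂⁆])
    (hZ0 : ⁅X, Z⁆ = 0) :
    ⁅Y, Z⁆ ∈ Submodule.span ℝ {⁅X, u₁⁆, ⁅X, u₂⁆} := by
  by_contra hw
  -- the triple (w, p₁, p₂) is linearly independent
  have htri : LinearIndependent ℝ ![⁅Y, Z⁆, ⁅X, u₁⁆, ⁅X, u₂⁆] := by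
    have : LinearIndependent ℝ (Fin.cons ⁅Y, Z⁆ ![⁅X, u₁⁆, ⁅X, u₂⁆]) := by
      rw [linearIndependent_fin_cons]
      exact ⟨hp, by rwa [aux_range_pair]⟩
    exact this
  -- memberships
  have hwm : ⁅Y, Z⁆ ∈ m2 := hm2b Y hY Z hZm
  have hp1m : ⁅X, u₁⁆ ∈ m2 := hm2b X hX u₁ hu₁
  have hp2m : ⁅X, u₂⁆ ∈ m2 := hm2b X hX u₂ hu₂
  -- lift to m2
  set vv : Fin 3 → m2 := ![⟨⁅Y, Z⁆, hwm⟩, ⟨⁅X, u₁⁆, hp1m⟩, ⟨⁅X, u₂⁆, hp2m⟩] with hvvdef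
  have hvvcomp : (m2.subtype) ∘ vv = ![⁅Y, Z⁆, ⁅X, u₁⁆, ⁅X, u₂⁆] := by
    funext i; fin_cases i <;> rfl
  have hvvli : LinearIndependent ℝ vv :=
    LinearIndependent.of_comp m2.subtype (hvvcomp ▸ htri)
  have hfr : finrank ℝ m2 = 3 := by
    have h3 := hvvli.fintype_card_le_finrank
    simp at h3
    omega
  -- basis of m2
  set bb : Basis (Fin 3) ℝ m2 := basisOfLinearIndependentOfCardEqFinrank hvvli (by simp [hfr])
    with hbbdef
  have hbb : ⇑bb = vv := coe_basisOfLinearIndependentOfCardEqFinrank hvvli _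
  -- the three bracket vectors, as functions of t
  have hmemt : ∀ t : ℝ, X + t • Y ∈ m1 := fun t => m1.add_mem hX (m1.smul_mem t hY)
  set VV : ℝ → Fin 3 → m2 := fun t =>
    ![⟨⁅X + t • Y, u₁⁆, hm2b _ (hmemt t) u₁ hu₁⟩,
      ⟨⁅X + t • Y, u₂⁆, hm2b _ (hmemt t) u₂ hu₂⟩,
      ⟨⁅Y, Z⁆, hwm⟩] with hVVdef
  set W0 : Fin 3 → m2 := ![⟨⁅Y, u₁⁆, hm2b Y hY u₁ hu₁⟩, ⟨⁅Y, u₂⁆, hm2b Y hY u₂ hu₂⟩, 0]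
    with hW0def
  set V0 : Fin 3 → m2 := ![vv 1, vv 2, vv 0] with hV0def
  have hVVdecomp : ∀ (t : ℝ) (j : Fin 3), VV t j = V0 j + t • W0 j := by
    intro t j
    fin_cases j
    · apply Subtype.ext
      show ⁅X + t • Y, u₁⁆ = ⁅X, u₁⁆ + t • ⁅Y, u₁⁆
      rw [add_lie, smul_lie]
    · apply Subtype.ext
      show ⁅X + t • Y, u₂⁆ = ⁅X, u₂⁆ + t • ⁅Y, u₂⁆
      rw [add_lie, smul_lie]
    · show VV t 2 = V0 2 + t • W0 2
      simp [hVVdef, hV0def, hW0def, hvvdef]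
  -- polynomial matrix
  set N : Matrix (Fin 3) (Fin 3) (Polynomial ℝ) := fun i j =>
    Polynomial.C ((bb.repr (V0 j)) i) + Polynomial.X * Polynomial.C ((bb.repr (W0 j)) i)
    with hNdef
  have hNt : ∀ t : ℝ, N.map (Polynomial.evalRingHom t) = bb.toMatrix (VV t) := by
    intro t
    ext i j
    rw [Matrix.map_apply, Basis.toMatrix_apply, hVVdecomp t j]
    show Polynomial.eval t (Polynomial.C ((bb.repr (V0 j)) i)
        + Polynomial.X * Polynomial.C ((bb.repr (W0 j)) i)) = _
    simp only [map_add, map_smul, Finsupp.add_apply, Finsupp.smul_apply, smul_eq_mul,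
      Polynomial.eval_add, Polynomial.eval_mul, Polynomial.eval_C, Polynomial.eval_X]
  -- for t ≠ 0 the determinant vanishes
  have hdet0 : ∀ t : ℝ, t ≠ 0 → (bb.toMatrix (VV t)).det = 0 := by
    intro t ht
    rw [← Basis.det_apply]
    apply AlternatingMap.map_linearDependent
    intro hli
    have hZt : t⁻¹ • Z ∈ m1 := m1.smul_mem _ hZm
    apply hrank (X + t • Y) (hmemt t) u₁ hu₁ u₂ hu₂ (t⁻¹ • Z) hZt
    have hlast : ⁅X + t • Y, t⁻¹ • Z⁆ = ⁅Y, Z⁆ := by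
      rw [lie_smul, add_lie, hZ0, zero_add, smul_lie, smul_smul, inv_mul_cancel₀ ht, one_smul]
    have hcomp2 : (m2.subtype) ∘ (VV t) =
        ![⁅X + t • Y, u₁⁆, ⁅X + t • Y, u₂⁆, ⁅X + t • Y, t⁻¹ • Z⁆] := by
      funext i; fin_cases i <;> simp [hVVdef, hlast]
    have := hli.map' m2.subtype (Submodule.ker_subtype m2)
    rwa [hcomp2] at this
  -- hence det N = 0 as a polynomial
  have hN0 : N.det = 0 := by
    apply Polynomial.eq_zero_of_infinite_isRoot
    apply Set.Infinite.mono (s := {(0:ℝ)}ᶜ)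
    · intro t ht
      simp only [Set.mem_compl_iff, Set.mem_singleton_iff] at ht
      show Polynomial.IsRoot N.det t
      have := RingHom.map_det (Polynomial.evalRingHom t) N
      rw [RingHom.mapMatrix_apply, hNt t, hdet0 t ht] at this
      simpa [Polynomial.IsRoot] using this
    · exact (Set.finite_singleton 0).infinite_compl
  -- evaluate at 0
  have he0 : (bb.toMatrix (VV 0)).det = 0 := by
    have := RingHom.map_det (Polynomial.evalRingHom 0) N
    rw [RingHom.mapMatrix_apply, hNt 0, hN0] at this
    simpa using this.symm
  -- but the matrix at 0 is a permutation matrix with det 1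
  have hrepr : ∀ k i : Fin 3, (bb.repr (vv k)) i = if k = i then 1 else 0 := by
    intro k i
    rw [← hbb, Basis.repr_self, Finsupp.single_apply]
  have hmat : bb.toMatrix (VV 0) = !![0,0,1;1,0,0;0,1,0] := by
    ext i j
    rw [Basis.toMatrix_apply, hVVdecomp 0 j]
    fin_cases i <;> fin_cases j <;>
      simp [hV0def, hW0def, hrepr, Matrix.vecHead, Matrix.vecTail]
  rw [hmat] at he0
  norm_num [Matrix.det_fin_three] at he0
  rcases he0 with he0 | he0 <;> exact one_ne_zero he0

end lemA

/-- The only non-ad-surjective step 2 fundamental graded Lie algebra with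
`dim 𝔪₋₂ ≤ 3` and `𝔪₋₁ ∩ Z(𝔪) = 0` is the truncated step 2 free Lie algebra with
3 generators: `dim 𝔪₋₁ = dim 𝔪₋₂ = 3` and the bracket induces a linear isomorphism
`Λ²(𝔪₋₁) ≃ 𝔪₋₂`. -/
theorem truncatedFree_of_not_adSurjective (L : Type*) [LieRing L] [LieAlgebra ℝ L]
    [FiniteDimensional ℝ L] (m1 m2 : Submodule ℝ L)
    (h : IsStep2FGLA L m1 m2)
    (hdim3 : Module.finrank ℝ ↥m2 ≤ 3)
    (hcenter : ∀ x ∈ m1, (∀ y : L, ⁅x, y⁆ = 0) → x = 0)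
    (hnot : ¬ ∃ X ∈ m1, ∀ z ∈ m2, ∃ Y ∈ m1, ⁅X, Y⁆ = z) :
    Module.finrank ℝ ↥m1 = 3 ∧ Module.finrank ℝ ↥m2 = 3 ∧
      ∃ e : ↥(⋀[ℝ]^2 ↥m1) ≃ₗ[ℝ] ↥m2,
        ∀ x y : ↥m1,
          ((e ⟨ExteriorAlgebra.ιMulti ℝ 2 ![x, y],
              ExteriorAlgebra.ιMulti_range ℝ 2 (Set.mem_range_self _)⟩ : ↥m2) : L)
            = ⁅(x : L), (y : L)⁆ := by
  classical
  push_neg at hnot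
  have hm2b : ∀ x ∈ m1, ∀ y ∈ m1, ⁅x, y⁆ ∈ m2 := by
    intro x hx y hy
    rw [h.span_brackets]
    exact Submodule.subset_span ⟨x, hx, y, hy, rfl⟩
  -- the "ad" maps and their ranges
  set SS : L → Submodule ℝ L :=
    fun x => LinearMap.range ((LieAlgebra.ad ℝ L x) ∘ₗ m1.subtype) with hSSdef
  have hSSmem : ∀ x : L, ∀ y ∈ m1, ⁅x, y⁆ ∈ SS x := by
    intro x y hy
    exact ⟨⟨y, hy⟩, by simp [LieAlgebra.ad_apply]⟩
  have hSSel : ∀ x : L, ∀ w ∈ SS x, ∃ y ∈ m1, ⁅x, y⁆ = w := by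
    rintro x w ⟨⟨y, hy⟩, rfl⟩
    exact ⟨y, hy, by simp [LieAlgebra.ad_apply]⟩
  have hSSlt : ∀ x ∈ m1, SS x < m2 := by
    intro x hx
    obtain ⟨z, hzm, hz⟩ := hnot x hx
    refine lt_of_le_of_ne ?_ ?_
    · rintro w ⟨⟨y, hy⟩, rfl⟩
      exact hm2b x hx y hy
    · intro heq
      obtain ⟨y, hy, hyz⟩ := hSSel x z (heq ▸ hzm)
      exact hz y hy hyz
  have hSSfr : ∀ x ∈ m1, finrank ℝ (SS x) ≤ 2 := by
    intro x hx
    have := Submodule.finrank_lt_finrank_of_lt (hSSlt x hx)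
    omega
  have hrank : ∀ x ∈ m1, ∀ y1 ∈ m1, ∀ y2 ∈ m1, ∀ y3 ∈ m1,
      ¬ LinearIndependent ℝ ![⁅x, y1⁆, ⁅x, y2⁆, ⁅x, y3⁆] := by
    intro x hx y1 h1 y2 h2 y3 h3
    exact aux_dep3 (hSSfr x hx) (hSSmem x y1 h1) (hSSmem x y2 h2) (hSSmem x y3 h3)
  -- existence of an element of rank 2
  have hex : ∃ X₀ ∈ m1, ∃ a ∈ m1, ∃ b ∈ m1,
      LinearIndependent ℝ ![⁅X₀, a⁆, ⁅X₀, b⁆] := by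
    by_contra hcon
    push_neg at hcon
    have hr1 : ∀ x ∈ m1, ∀ y ∈ m1, ⁅x, y⁆ ≠ 0 → ∀ v ∈ m1,
        ⁅x, v⁆ ∈ Submodule.span ℝ {⁅x, y⁆} :=
      fun x hx y hy hne v hv => aux_pair_mem_span (hcon x hx v hv y hy) hne
    -- there is a nonzero bracket
    obtain ⟨z0, hz0m, hz0⟩ := hnot 0 (zero_mem m1)
    have hz0ne : z0 ≠ 0 := by
      intro h0
      exact hz0 0 (zero_mem m1) (by rw [h0, lie_zero])
    have hbrne : ∃ X ∈ m1, ∃ Y ∈ m1, ⁅X, Y⁆ ≠ 0 := by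
      by_contra hall
      push_neg at hall
      have : m2 ≤ ⊥ := by
        rw [h.span_brackets]
        apply Submodule.span_le.2
        rintro z ⟨x, hx, y, hy, rfl⟩
        simp [hall x hx y hy]
      rw [le_bot_iff] at this
      rw [this] at hz0m
      exact hz0ne (Submodule.mem_bot ℝ |>.1 hz0m)
    obtain ⟨X, hX, Y, hY, hc⟩ := hbrne
    by_cases hcd : ∀ u ∈ m1, ∀ v ∈ m1, ⁅u, v⁆ ∈ Submodule.span ℝ {⁅X, Y⁆}
    · -- then ad X is surjective: contradiction
      obtain ⟨z, hzm, hz⟩ := hnot X hX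
      have : z ∈ Submodule.span ℝ {⁅X, Y⁆} := by
        have hle : m2 ≤ Submodule.span ℝ {⁅X, Y⁆} := by
          rw [h.span_brackets]
          apply Submodule.span_le.2
          rintro w ⟨x, hx, y, hy, rfl⟩
          exact hcd x hx y hy
        exact hle hzm
      obtain ⟨c, hcz⟩ := Submodule.mem_span_singleton.1 this
      exact hz (c • Y) (m1.smul_mem c hY) (by rw [lie_smul, hcz])
    · push_neg at hcd
      obtain ⟨u, hu, v, hv, hd⟩ := hcd
      have hdne : ⁅u, v⁆ ≠ 0 := by
        intro h0; exact hd (h0 ▸ zero_mem _)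
      -- span{c} ∩ span{d} = 0
      have hcap : ∀ e : L, e ∈ Submodule.span ℝ {⁅X, Y⁆} →
          e ∈ Submodule.span ℝ {⁅u, v⁆} → e = 0 := by
        intro e he1 he2
        obtain ⟨γ, hγ⟩ := Submodule.mem_span_singleton.1 he1
        obtain ⟨δ, hδ⟩ := Submodule.mem_span_singleton.1 he2
        rcases eq_or_ne δ 0 with rfl | hδne
        · rw [← hδ, zero_smul]
        · exfalso
          apply hd
          rw [Submodule.mem_span_singleton]
          exact ⟨δ⁻¹ * γ, by rw [mul_smul, hγ, ← hδ, smul_smul, inv_mul_cancel₀ hδne, one_smul]⟩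
      -- the "other-pair" brackets vanish
      have huY : ⁅u, Y⁆ = 0 := by
        have h1 : ⁅u, Y⁆ ∈ Submodule.span ℝ {⁅u, v⁆} := hr1 u hu v hv hdne Y hY
        have h2 : ⁅u, Y⁆ ∈ Submodule.span ℝ {⁅X, Y⁆} := by
          have h3 : ⁅Y, u⁆ ∈ Submodule.span ℝ {⁅Y, X⁆} := by
            apply hr1 Y hY X hX _ u hu
            intro h0
            apply hc
            rw [← neg_eq_zero, lie_skew, h0]
          have h4 : ⁅u, Y⁆ ∈ Submodule.span ℝ {⁅Y, X⁆} := by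
            rw [show ⁅u, Y⁆ = -⁅Y, u⁆ from neg_eq_iff_eq_neg.1 (lie_skew Y u)]
            exact neg_mem h3
          obtain ⟨γ, hγ⟩ := Submodule.mem_span_singleton.1 h4
          rw [Submodule.mem_span_singleton]
          refine ⟨-γ, ?_⟩
          rw [← lie_skew, smul_neg, neg_smul, neg_neg, hγ]
        exact hcap _ h2 h1
      have hXv : ⁅X, v⁆ = 0 := by
        have h1 : ⁅X, v⁆ ∈ Submodule.span ℝ {⁅X, Y⁆} := hr1 X hX Y hY hc v hv
        have h2 : ⁅X, v⁆ ∈ Submodule.span ℝ {⁅u, v⁆} := by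
          have h3 : ⁅v, X⁆ ∈ Submodule.span ℝ {⁅v, u⁆} := by
            apply hr1 v hv u hu _ X hX
            intro h0
            apply hdne
            rw [← neg_eq_zero, lie_skew, h0]
          have h4 : ⁅X, v⁆ ∈ Submodule.span ℝ {⁅v, u⁆} := by
            rw [show ⁅X, v⁆ = -⁅v, X⁆ from neg_eq_iff_eq_neg.1 (lie_skew v X)]
            exact neg_mem h3
          obtain ⟨γ, hγ⟩ := Submodule.mem_span_singleton.1 h4
          rw [Submodule.mem_span_singleton]
          refine ⟨-γ, ?_⟩
          rw [← lie_skew, smul_neg, neg_smul, neg_neg, hγ]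
        exact hcap _ h1 h2
      -- the element X + u has two independent brackets
      have hWY : ⁅X + u, Y⁆ = ⁅X, Y⁆ := by rw [add_lie, huY, add_zero]
      have hWv : ⁅X + u, v⁆ = ⁅u, v⁆ := by rw [add_lie, hXv, zero_add]
      apply hcon (X + u) (m1.add_mem hX hu) Y hY v hv
      rw [hWY, hWv]
      apply aux_pair_indep hc
      exact hd
  obtain ⟨X₀, hX₀, a₀, ha₀, b₀, hb₀, hpair₀⟩ := hex
  -- `SS X₀` is the plane spanned by the two independent brackets
  have hspanle : ∀ (x p q : L), p ∈ SS x → q ∈ SS x →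
      Submodule.span ℝ {p, q} ≤ SS x := by
    intro x p q hp hq
    apply Submodule.span_le.2
    rintro w hw
    rcases hw with rfl | hw
    · exact hp
    · rcases hw with rfl; exact hq
  have hfrpair : ∀ p q : L, LinearIndependent ℝ ![p, q] →
      finrank ℝ (Submodule.span ℝ ({p, q} : Set L)) = 2 := by
    intro p q hpq
    have := finrank_span_eq_card hpq
    rwa [aux_range_pair, Fintype.card_fin] at this
  have hSeq : ∀ x ∈ m1, ∀ p q : L, p ∈ SS x → q ∈ SS x →
      LinearIndependent ℝ ![p, q] → Submodule.span ℝ {p, q} = SS x := by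
    intro x hx p q hp hq hpq
    apply Submodule.eq_of_le_of_finrank_le (hspanle x p q hp hq)
    rw [hfrpair p q hpq]
    exact hSSfr x hx
  have hSP₀ : Submodule.span ℝ {⁅X₀, a₀⁆, ⁅X₀, b₀⁆} = SS X₀ :=
    hSeq X₀ hX₀ _ _ (hSSmem X₀ a₀ ha₀) (hSSmem X₀ b₀ hb₀) hpair₀
  -- find a bracket outside this plane
  have hex2 : ∃ a ∈ m1, ∃ b ∈ m1, ⁅a, b⁆ ∉ SS X₀ := by
    by_contra hcon2
    push_neg at hcon2
    obtain ⟨z, hzm, hz⟩ := hnot X₀ hX₀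
    have hle : m2 ≤ SS X₀ := by
      rw [h.span_brackets]
      apply Submodule.span_le.2
      rintro w ⟨x, hx, y, hy, rfl⟩
      exact hcon2 x hx y hy
    obtain ⟨y, hy, hyz⟩ := hSSel X₀ z (hle hzm)
    exact hz y hy hyz
  obtain ⟨a, ha, b, hb, hr⟩ := hex2
  -- Lemma A at X₀ with the original pair
  have LA0' : ∀ Z ∈ m1, ⁅X₀, Z⁆ = 0 → ∀ Y ∈ m1, ⁅Y, Z⁆ ∈ SS X₀ := by
    intro Z hZ hZ0 Y hY
    rw [← hSP₀]
    exact lemmaA m1 m2 hdim3 hm2b hrank hX₀ ha₀ hb₀ hZ hY hpair₀ hZ0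
  -- brackets of X₀ with a and b
  have hpa0 : ⁅X₀, a⁆ ≠ 0 := by
    intro h0
    apply hr
    have := LA0' a ha h0 b hb
    rw [show ⁅a, b⁆ = -⁅b, a⁆ from neg_eq_iff_eq_neg.1 (lie_skew b a)]
    exact neg_mem this
  have hpb0 : ⁅X₀, b⁆ ≠ 0 := by
    intro h0
    apply hr
    exact LA0' b hb h0 a ha
  have hpab : LinearIndependent ℝ ![⁅X₀, a⁆, ⁅X₀, b⁆] := by
    by_contra hdep
    obtain ⟨μ, hμ⟩ := Submodule.mem_span_singleton.1 (aux_pair_mem_span hdep hpb0)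
    -- ⁅X₀, a⁆ = μ • ⁅X₀, b⁆
    have hZ0 : ⁅X₀, a - μ • b⁆ = 0 := by
      rw [lie_sub, lie_smul, ← hμ, sub_self]
    have := LA0' (a - μ • b) (m1.sub_mem ha (m1.smul_mem μ hb)) hZ0 b hb
    rw [lie_sub, lie_smul, lie_self, smul_zero, sub_zero] at this
    apply hr
    rw [show ⁅a, b⁆ = -⁅b, a⁆ from neg_eq_iff_eq_neg.1 (lie_skew b a)]
    exact neg_mem this
  have hPeq : Submodule.span ℝ {⁅X₀, a⁆, ⁅X₀, b⁆} = SS X₀ :=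
    hSeq X₀ hX₀ _ _ (hSSmem X₀ a ha) (hSSmem X₀ b hb) hpab
  -- abbreviations
  set pa := ⁅X₀, a⁆ with hpadef
  set pb := ⁅X₀, b⁆ with hpbdef
  set r := ⁅a, b⁆ with hrdef
  have hrP : r ∉ Submodule.span ℝ {pa, pb} := by rw [hPeq]; exact hr
  -- Lemma A instances
  have LA0 : ∀ Z ∈ m1, ⁅X₀, Z⁆ = 0 → ∀ Y ∈ m1, ⁅Y, Z⁆ ∈ Submodule.span ℝ {pa, pb} := by
    intro Z hZ hZ0 Y hY
    exact lemmaA m1 m2 hdim3 hm2b hrank hX₀ ha hb hZ hY hpab hZ0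
  have haX₀ : ⁅a, X₀⁆ = -pa := neg_eq_iff_eq_neg.1 (lie_skew X₀ a)
  have hbX₀ : ⁅b, X₀⁆ = -pb := neg_eq_iff_eq_neg.1 (lie_skew X₀ b)
  have hba : ⁅b, a⁆ = -r := neg_eq_iff_eq_neg.1 (lie_skew a b)
  have hpaP : pa ∈ Submodule.span ℝ {pa, pb} :=
    Submodule.subset_span (by left; rfl)
  have hpbP : pb ∈ Submodule.span ℝ {pa, pb} :=
    Submodule.subset_span (by right; rfl)
  have hQa_ind : LinearIndependent ℝ ![⁅a, X₀⁆, ⁅a, b⁆] := by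
    rw [haX₀, ← hrdef]
    apply aux_pair_indep (by simpa using hpa0)
    intro hmem
    apply hrP
    obtain ⟨γ, hγ⟩ := Submodule.mem_span_singleton.1 hmem
    rw [Submodule.mem_span_pair]
    exact ⟨-γ, 0, by rw [← hγ, zero_smul, add_zero, neg_smul, smul_neg]⟩
  have hQb_ind : LinearIndependent ℝ ![⁅b, X₀⁆, ⁅b, a⁆] := by
    rw [hbX₀, hba]
    apply aux_pair_indep (by simpa using hpb0)
    intro hmem
    apply hrP
    obtain ⟨γ, hγ⟩ := Submodule.mem_span_singleton.1 hmem
    rw [Submodule.mem_span_pair]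
    refine ⟨0, γ, by rw [← neg_neg r, ← hγ, zero_smul, zero_add, smul_neg, neg_neg]⟩
  have LAa : ∀ Z ∈ m1, ⁅a, Z⁆ = 0 → ∀ Y ∈ m1,
      ⁅Y, Z⁆ ∈ Submodule.span ℝ {⁅a, X₀⁆, ⁅a, b⁆} := by
    intro Z hZ hZ0 Y hY
    exact lemmaA m1 m2 hdim3 hm2b hrank ha hX₀ hb hZ hY hQa_ind hZ0
  have LAb : ∀ Z ∈ m1, ⁅b, Z⁆ = 0 → ∀ Y ∈ m1,
      ⁅Y, Z⁆ ∈ Submodule.span ℝ {⁅b, X₀⁆, ⁅b, a⁆} := by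
    intro Z hZ hZ0 Y hY
    exact lemmaA m1 m2 hdim3 hm2b hrank hb hX₀ ha hZ hY hQb_ind hZ0
  have hQaeq : Submodule.span ℝ {⁅a, X₀⁆, ⁅a, b⁆} = SS a :=
    hSeq a ha _ _ (hSSmem a X₀ hX₀) (hSSmem a b hb) hQa_ind
  have hQbeq : Submodule.span ℝ {⁅b, X₀⁆, ⁅b, a⁆} = SS b :=
    hSeq b hb _ _ (hSSmem b X₀ hX₀) (hSSmem b a ha) hQb_ind
  -- intersection lemmas
  have hint1 : ∀ e : L, e ∈ Submodule.span ℝ {pa, pb} →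
      e ∈ Submodule.span ℝ {⁅a, X₀⁆, ⁅a, b⁆} → e ∈ Submodule.span ℝ {pa} := by
    intro e heP heQ
    rw [Submodule.mem_span_pair] at heQ
    obtain ⟨γ, δ, hγδ⟩ := heQ
    rw [haX₀] at hγδ
    rcases eq_or_ne δ 0 with rfl | hδ
    · rw [Submodule.mem_span_singleton]
      refine ⟨-γ, ?_⟩
      rw [← hγδ, zero_smul, add_zero, smul_neg, neg_smul]
    · exfalso
      apply hrP
      have : δ • r = e + γ • pa := by
        rw [← hγδ, smul_neg]
        abel
      have hmem : δ • r ∈ Submodule.span ℝ {pa, pb} := by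
        rw [this]
        exact add_mem heP (Submodule.smul_mem _ γ hpaP)
      have := Submodule.smul_mem _ δ⁻¹ hmem
      rwa [smul_smul, inv_mul_cancel₀ hδ, one_smul] at this
  have hint2 : ∀ e : L, e ∈ Submodule.span ℝ {pa} →
      e ∈ Submodule.span ℝ {⁅b, X₀⁆, ⁅b, a⁆} → e = 0 := by
    intro e hepa heQ
    obtain ⟨γ, hγ⟩ := Submodule.mem_span_singleton.1 hepa
    rw [Submodule.mem_span_pair] at heQ
    obtain ⟨α, β, hαβ⟩ := heQ
    rw [hbX₀, hba] at hαβ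
    -- β • r = -(γ • pa) - (α • pb) ∈ P, hence β = 0
    have hβr : (-β) • r = γ • pa + α • pb := by
      have h1 : -(α • pb) + -(β • r) = γ • pa := by
        have h2 := hαβ.trans hγ.symm
        simpa using h2
      rw [neg_smul, ← h1]
      abel
    have hβ : β = 0 := by
      by_contra hβne
      apply hrP
      have hmem : (-β) • r ∈ Submodule.span ℝ {pa, pb} := by
        rw [hβr, Submodule.mem_span_pair]
        exact ⟨γ, α, rfl⟩
      have := Submodule.smul_mem _ (-β)⁻¹ hmem
      rwa [smul_smul, inv_mul_cancel₀ (neg_ne_zero.2 hβne), one_smul] at this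
    rw [hβ] at hβr
    rw [neg_zero, zero_smul] at hβr
    obtain ⟨hγ0, hα0⟩ := aux_coeffs hpab hβr.symm
    rw [← hγ, hγ0, zero_smul]
  -- the kernel of ad X₀ on m1 is spanned by X₀
  have hker : ∀ Z ∈ m1, ⁅X₀, Z⁆ = 0 → ∃ μ : ℝ, Z = μ • X₀ := by
    intro Z hZ hZ0
    have h2 : ⁅a, Z⁆ ∈ Submodule.span ℝ {⁅a, X₀⁆, ⁅a, b⁆} := by
      rw [hQaeq]; exact hSSmem a Z hZ
    obtain ⟨ν, hν⟩ := Submodule.mem_span_singleton.1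
      (hint1 _ (LA0 Z hZ hZ0 a ha) h2)
    -- pass to Z' = Z + ν • X₀
    have hZ'm : Z + ν • X₀ ∈ m1 := m1.add_mem hZ (m1.smul_mem ν hX₀)
    have hZ'X₀ : ⁅X₀, Z + ν • X₀⁆ = 0 := by
      rw [lie_add, hZ0, lie_smul, lie_self, smul_zero, add_zero]
    have hZ'a : ⁅a, Z + ν • X₀⁆ = 0 := by
      rw [lie_add, lie_smul, haX₀, ← hν, smul_neg, add_neg_cancel]
    have hspa : ∀ Y ∈ m1, ⁅Y, Z + ν • X₀⁆ ∈ Submodule.span ℝ {pa} := fun Y hY =>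
      hint1 _ (LA0 _ hZ'm hZ'X₀ Y hY) (LAa _ hZ'm hZ'a Y hY)
    have hbZ' : ⁅b, Z + ν • X₀⁆ = 0 := by
      apply hint2 _ (hspa b hb)
      rw [hQbeq]
      exact hSSmem b _ hZ'm
    have hall0 : ∀ Y ∈ m1, ⁅Y, Z + ν • X₀⁆ = 0 := fun Y hY =>
      hint2 _ (hspa Y hY) (LAb _ hZ'm hbZ' Y hY)
    have hZ'0 : Z + ν • X₀ = 0 := by
      apply hcenter _ hZ'm
      intro y
      have hytop : y ∈ m1 ⊔ m2 := by
        rw [h.compl.sup_eq_top]; trivial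
      obtain ⟨y1, hy1, y2, hy2, rfl⟩ := Submodule.mem_sup.1 hytop
      rw [lie_add, h.bracket_m1_m2 _ hZ'm y2 hy2, add_zero,
        show ⁅Z + ν • X₀, y1⁆ = -⁅y1, Z + ν • X₀⁆ from neg_eq_iff_eq_neg.1 (lie_skew y1 _),
        hall0 y1 hy1, neg_zero]
    exact ⟨-ν, by rw [neg_smul, eq_neg_of_add_eq_zero_left hZ'0]⟩
  -- dimension of m1
  have hX₀ne : X₀ ≠ 0 := by
    intro h0
    apply hpa0
    rw [hpadef, h0, zero_lie]
  have hfr1 : finrank ℝ ↥m1 = 3 := by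
    set f : ↥m1 →ₗ[ℝ] L := (LieAlgebra.ad ℝ L X₀) ∘ₗ m1.subtype with hfdef
    have hrange : LinearMap.range f = SS X₀ := rfl
    have hX₀m1 : (⟨X₀, hX₀⟩ : ↥m1) ∈ LinearMap.ker f := by
      simp [hfdef, LieAlgebra.ad_apply]
    have hkerf : LinearMap.ker f = Submodule.span ℝ {(⟨X₀, hX₀⟩ : ↥m1)} := by
      apply le_antisymm
      · intro Z hZf
        have hZf' : ⁅X₀, (Z : L)⁆ = 0 := by
          simpa [hfdef, LieAlgebra.ad_apply] using hZf
        obtain ⟨μ, hμ⟩ := hker (Z : L) Z.2 hZf'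
        rw [Submodule.mem_span_singleton]
        exact ⟨μ, by apply Subtype.ext; simp [hμ]⟩
      · rw [Submodule.span_singleton_le_iff_mem]
        exact hX₀m1
    have hrn := LinearMap.finrank_range_add_finrank_ker f
    rw [hrange, ← hPeq, hkerf, finrank_span_singleton
      (by simp [Subtype.ext_iff, hX₀ne] : (⟨X₀, hX₀⟩ : ↥m1) ≠ 0)] at hrn
    rw [hfrpair pa pb hpab] at hrn
    omega
  -- dimension of m2
  have htriple : LinearIndependent ℝ ![r, pa, pb] := by
    have : LinearIndependent ℝ (Fin.cons r ![pa, pb]) := by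
      rw [linearIndependent_fin_cons]
      exact ⟨hpab, by rwa [aux_range_pair]⟩
    exact this
  have hrm2 : r ∈ m2 := hm2b a ha b hb
  have hpam2 : pa ∈ m2 := hm2b X₀ hX₀ a ha
  have hpbm2 : pb ∈ m2 := hm2b X₀ hX₀ b hb
  have hfr2 : finrank ℝ ↥m2 = 3 := by
    have hcomp : (m2.subtype) ∘ (![⟨r, hrm2⟩, ⟨pa, hpam2⟩, ⟨pb, hpbm2⟩] : Fin 3 → m2)
        = ![r, pa, pb] := by
      funext i; fin_cases i <;> rfl
    have hli' : LinearIndependent ℝ (![⟨r, hrm2⟩, ⟨pa, hpam2⟩, ⟨pb, hpbm2⟩] : Fin 3 → m2) :=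
      LinearIndependent.of_comp m2.subtype (hcomp ▸ htriple)
    have h3 := hli'.fintype_card_le_finrank
    simp at h3
    omega
  refine ⟨hfr1, hfr2, ?_⟩
  -- the bracket as a bilinear map m1 × m1 → m2
  set B : ↥m1 →ₗ[ℝ] ↥m1 →ₗ[ℝ] ↥m2 := LinearMap.mk₂ ℝ
    (fun x y => (⟨⁅(x : L), (y : L)⁆, hm2b _ x.2 _ y.2⟩ : ↥m2))
    (fun x x' y => Subtype.ext (by simp [add_lie]))
    (fun c x y => Subtype.ext (by simp [smul_lie]))
    (fun x y y' => Subtype.ext (by simp [lie_add]))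
    (fun c x y => Subtype.ext (by simp [lie_smul])) with hBdef
  have hBapply : ∀ (x y : ↥m1), ((B x y : ↥m2) : L) = ⁅(x : L), (y : L)⁆ := fun x y => rfl
  have hBzero : ∀ x : ↥m1, B x x = 0 := fun x => Subtype.ext (by
    show ⁅(x : L), (x : L)⁆ = ((0 : ↥m2) : L)
    rw [lie_self]
    simp)
  -- the bracket as an alternating map
  set F : ↥m1 [⋀^Fin 2]→ₗ[ℝ] ↥m2 :=
    { toMultilinearMap :=
      { toFun := fun v => B (v 0) (v 1)
        map_update_add' := by
          intro dec v i x y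
          fin_cases i <;>
            simp [Function.update_apply, show (0 : Fin 2) ≠ 1 from Fin.ne_of_val_ne (by norm_num),
              show (1 : Fin 2) ≠ 0 from Fin.ne_of_val_ne (by norm_num)]
        map_update_smul' := by
          intro dec v i c x
          fin_cases i <;>
            simp [Function.update_apply, show (0 : Fin 2) ≠ 1 from Fin.ne_of_val_ne (by norm_num),
              show (1 : Fin 2) ≠ 0 from Fin.ne_of_val_ne (by norm_num)] }
      map_eq_zero_of_eq' := by
        intro v i j hvij hij
        show B (v 0) (v 1) = 0
        have h01 : ∀ w : Fin 2 → ↥m1, w 0 = w 1 → B (w 0) (w 1) = 0 := by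
          intro w hw
          rw [hw]
          exact hBzero _
        fin_cases i <;> fin_cases j
        · exact absurd rfl hij
        · exact h01 v (by exact hvij)
        · exact h01 v (by exact hvij.symm)
        · exact absurd rfl hij } with hFdef
  set F' : ∀ i, ↥m1 [⋀^Fin i]→ₗ[ℝ] ↥m2 := fun i =>
    if hi : i = 2 then hi ▸ F else 0
    with hF'def
  have hF'2 : F' 2 = F := by rw [hF'def]; exact dif_pos rfl
  set φ : ↥(⋀[ℝ]^2 ↥m1) →ₗ[ℝ] ↥m2 :=
    (ExteriorAlgebra.liftAlternating F') ∘ₗ (Submodule.subtype (⋀[ℝ]^2 ↥m1)) with hφdef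
  have hφ : ∀ v : Fin 2 → ↥m1,
      φ ⟨ExteriorAlgebra.ιMulti ℝ 2 v,
        ExteriorAlgebra.ιMulti_range ℝ 2 (Set.mem_range_self _)⟩ = B (v 0) (v 1) := by
    intro v
    show ExteriorAlgebra.liftAlternating F' (ExteriorAlgebra.ιMulti ℝ 2 v) = _
    rw [ExteriorAlgebra.liftAlternating_apply_ιMulti, hF'2]
    rfl
  -- the second exterior power has dimension at most 3
  obtain bm1 := finBasisOfFinrankEq ℝ ↥m1 hfr1
  set gg : Fin 3 → ExteriorAlgebra ℝ ↥m1 :=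
    ![ExteriorAlgebra.ι ℝ (bm1 0) * ExteriorAlgebra.ι ℝ (bm1 1),
      ExteriorAlgebra.ι ℝ (bm1 0) * ExteriorAlgebra.ι ℝ (bm1 2),
      ExteriorAlgebra.ι ℝ (bm1 1) * ExteriorAlgebra.ι ℝ (bm1 2)] with hggdef
  have hanti : ∀ x y : ↥m1, ExteriorAlgebra.ι ℝ x * ExteriorAlgebra.ι ℝ y
      = -(ExteriorAlgebra.ι ℝ y * ExteriorAlgebra.ι ℝ x) := fun x y =>
    eq_neg_of_add_eq_zero_left (ExteriorAlgebra.ι_add_mul_swap x y)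
  have hij : ∀ i j : Fin 3,
      ExteriorAlgebra.ι ℝ (bm1 i) * ExteriorAlgebra.ι ℝ (bm1 j)
        ∈ Submodule.span ℝ (Set.range gg) := by
    have hmem : ∀ k : Fin 3, gg k ∈ Submodule.span ℝ (Set.range gg) := fun k =>
      Submodule.subset_span ⟨k, rfl⟩
    intro i j
    fin_cases i <;> fin_cases j
    · rw [ExteriorAlgebra.ι_sq_zero]; exact zero_mem _
    · exact hmem 0
    · exact hmem 1
    · rw [hanti]; exact neg_mem (hmem 0)
    · rw [ExteriorAlgebra.ι_sq_zero]; exact zero_mem _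
    · exact hmem 2
    · rw [hanti]; exact neg_mem (hmem 1)
    · rw [hanti]; exact neg_mem (hmem 2)
    · rw [ExteriorAlgebra.ι_sq_zero]; exact zero_mem _
  have hprod : ∀ x y : ↥m1, ExteriorAlgebra.ι ℝ x * ExteriorAlgebra.ι ℝ y
      ∈ Submodule.span ℝ (Set.range gg) := by
    intro x y
    rw [← bm1.sum_repr x, ← bm1.sum_repr y, map_sum, map_sum, Finset.sum_mul_sum]
    apply Submodule.sum_mem
    intro i _
    apply Submodule.sum_mem
    intro j _
    rw [map_smul, map_smul, smul_mul_assoc, mul_smul_comm]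
    exact Submodule.smul_mem _ _ (Submodule.smul_mem _ _ (hij i j))
  have hspan2 : (⋀[ℝ]^2 ↥m1) ≤ Submodule.span ℝ (Set.range gg) := by
    rw [← ExteriorAlgebra.ιMulti_span_fixedDegree]
    apply Submodule.span_le.2
    rintro _ ⟨v, rfl⟩
    have hvm : ExteriorAlgebra.ιMulti ℝ 2 v
        = ExteriorAlgebra.ι ℝ (v 0) * ExteriorAlgebra.ι ℝ (v 1) := by
      rw [ExteriorAlgebra.ιMulti_succ_apply, ExteriorAlgebra.ιMulti_succ_apply,
        ExteriorAlgebra.ιMulti_zero_apply, mul_one]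
      rfl
    rw [hvm]
    exact hprod _ _
  haveI hFDspan : FiniteDimensional ℝ ↥(Submodule.span ℝ (Set.range gg)) :=
    FiniteDimensional.span_of_finite ℝ (Set.finite_range gg)
  haveI hFD : FiniteDimensional ℝ ↥(⋀[ℝ]^2 ↥m1) :=
    Submodule.finiteDimensional_of_le hspan2
  have hfrE : finrank ℝ ↥(⋀[ℝ]^2 ↥m1) ≤ 3 := by
    have h1 := Submodule.finrank_mono (R := ℝ) hspan2
    have h2 := finrank_range_le_card (R := ℝ) gg
    rw [Set.finrank] at h2
    simp only [Fintype.card_fin] at h2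
    omega
  -- φ is surjective
  have hsurj : LinearMap.range φ = ⊤ := by
    apply Submodule.map_injective_of_injective (Submodule.injective_subtype m2)
    rw [Submodule.map_subtype_top]
    apply le_antisymm
    · rintro z ⟨w, hw, rfl⟩
      exact w.2
    · nth_rewrite 1 [h.span_brackets]
      apply Submodule.span_le.2
      rintro z ⟨x, hx, y, hy, rfl⟩
      refine ⟨B ⟨x, hx⟩ ⟨y, hy⟩, ?_, rfl⟩
      exact ⟨⟨ExteriorAlgebra.ιMulti ℝ 2 ![⟨x, hx⟩, ⟨y, hy⟩],
        ExteriorAlgebra.ιMulti_range ℝ 2 (Set.mem_range_self _)⟩, hφ ![⟨x, hx⟩, ⟨y, hy⟩]⟩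
  -- φ is injective
  have hinj : Function.Injective φ := by
    have hrn := LinearMap.finrank_range_add_finrank_ker φ
    rw [hsurj, finrank_top, hfr2] at hrn
    apply (LinearMap.injective_iff_surjective_of_finrank_eq_finrank (by omega)).2
    exact LinearMap.range_eq_top.1 hsurj
  refine ⟨LinearEquiv.ofBijective φ ⟨hinj,
    LinearMap.range_eq_top.1 hsurj⟩, ?_⟩
  intro x y
  show ((φ ⟨ExteriorAlgebra.ιMulti ℝ 2 ![x, y],
      ExteriorAlgebra.ιMulti_range ℝ 2 (Set.mem_range_self _)⟩ : ↥m2) : L) = ⁅(x : L), (y : L)⁆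
  rw [hφ ![x, y]]
  rfl
end

section
/- Let 𝔪 = 𝔪₋₁ ⊕ 𝔪₋₂ be an ad-surjective step 2 fundamental graded Lie algebra over ℝ, and suppose 𝔪 is decomposed as a direct sum of finitely many Lie ideals 𝔪¹, …, 𝔪ᵏ that pairwise commute (⁅𝔪ⁱ, 𝔪ʲ⁆ = 0 for i ≠ j), are compatible with the grading (𝔪₋ⱼ = ⊕ᵢ (𝔪ⁱ ∩ 𝔪₋ⱼ) for j = 1, 2), and each of which is a fundamental graded Lie algebra with components 𝔪ⁱ ∩ 𝔪₋ⱼ. Then every component 𝔪ⁱ is ad-surjective; more precisely, if X ∈ 𝔪₋₁ is an ad-generating element of 𝔪, then the projection of X to 𝔪ⁱ ∩ 𝔪₋₁ is an ad-generating element of 𝔪ⁱ. -/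

private lemma sum_lie' {L : Type*} [LieRing L] {ι : Type*} (s : Finset ι)
    (g : ι → L) (a : L) : ⁅∑ j ∈ s, g j, a⁆ = ∑ j ∈ s, ⁅g j, a⁆ := by
  induction s using Finset.cons_induction with
  | empty => simp
  | cons j s hj ih => simp [Finset.sum_cons, add_lie, ih]

private lemma lie_sum' {L : Type*} [LieRing L] {ι : Type*} (s : Finset ι)
    (g : ι → L) (a : L) : ⁅a, ∑ j ∈ s, g j⁆ = ∑ j ∈ s, ⁅a, g j⁆ := by
  induction s using Finset.cons_induction with
  | empty => simp
  | cons j s hj ih => simp [Finset.sum_cons, lie_add, ih]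

/-- If an ad-surjective step 2 fundamental graded Lie algebra `𝔪 = 𝔪₋₁ ⊕ 𝔪₋₂` is a
direct sum of finitely many pairwise commuting graded Lie ideals `𝔪¹, …, 𝔪ᵏ`, each of
which is a fundamental graded Lie algebra with components `𝔪ⁱ ∩ 𝔪₋ⱼ`, then every
component `𝔪ⁱ` is ad-surjective; more precisely, if `X` is an ad-generating element
of `𝔪`, then the projection `x i` of `X` to `𝔪ⁱ ∩ 𝔪₋₁` is an ad-generating element
of `𝔪ⁱ`. -/
theorem components_adSurjective_of_adSurjective
    (L : Type*) [LieRing L] [LieAlgebra ℝ L] [FiniteDimensional ℝ L]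
    (m1 m2 : Submodule ℝ L) (h : IsStep2FGLA L m1 m2)
    (k : ℕ) (p : Fin k → Submodule ℝ L)
    (hideal : ∀ i, ∀ x : L, ∀ y ∈ p i, ⁅x, y⁆ ∈ p i)
    (hcomm : ∀ i j, i ≠ j → ∀ x ∈ p i, ∀ y ∈ p j, ⁅x, y⁆ = 0)
    (hindep : iSupIndep p) (hspan : ⨆ i, p i = ⊤)
    (hgrade1 : m1 = ⨆ i, (p i ⊓ m1)) (hgrade2 : m2 = ⨆ i, (p i ⊓ m2))
    (hfund : ∀ i, Submodule.span ℝ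
        {z : L | ∃ x ∈ p i ⊓ m1, ∃ y ∈ p i ⊓ m1, ⁅x, y⁆ = z} = p i ⊓ m2)
    (X : L) (hX1 : X ∈ m1) (hXgen : ∀ z ∈ m2, ∃ Y ∈ m1, ⁅X, Y⁆ = z)
    (x : Fin k → L) (hx : ∀ i, x i ∈ p i ⊓ m1) (hXsum : X = ∑ i, x i) :
    ∀ i, ∀ z ∈ p i ⊓ m2, ∃ Y ∈ p i ⊓ m1, ⁅x i, Y⁆ = z := by

  intro i z hz
  obtain ⟨Y, hY, hYz⟩ := hXgen z hz.2
  rw [hgrade1, Submodule.mem_iSup_iff_exists_finsupp] at hY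
  obtain ⟨f, hf, hsum⟩ := hY
  rw [Finsupp.sum_fintype _ _ (fun _ => rfl)] at hsum
  set y : Fin k → L := fun j => f j with hy
  -- bracket expansion
  have hbr : ⁅X, Y⁆ = ∑ j, ⁅x j, y j⁆ := by
    rw [hXsum, ← hsum]
    rw [sum_lie']
    refine Finset.sum_congr rfl fun j _ => ?_
    rw [lie_sum']
    rw [Finset.sum_eq_single j]
    · intro b _ hb
      exact hcomm j b (Ne.symm hb) (x j) (hx j).1 (y b) (hf b).1
    · intro hj; exact absurd (Finset.mem_univ j) hj
  -- each term lies in p j ⊓ m2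
  have hmem : ∀ j, ⁅x j, y j⁆ ∈ p j ⊓ m2 := by
    intro j
    refine ⟨hideal j (x j) (y j) (hf j).1, ?_⟩
    rw [h.span_brackets]
    exact Submodule.subset_span ⟨x j, (hx j).2, y j, (hf j).2, rfl⟩
  -- z - ⁅x i, y i⁆ is in p i and in ⨆ j ≠ i, p j, hence 0
  have hkey : z = ⁅x i, y i⁆ := by
    have h1 : z - ⁅x i, y i⁆ ∈ p i := sub_mem hz.1 (hmem i).1
    have h2 : z - ⁅x i, y i⁆ ∈ ⨆ j, ⨆ (_ : j ≠ i), p j := by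
      have : z - ⁅x i, y i⁆ = ∑ j ∈ Finset.univ.erase i, ⁅x j, y j⁆ := by
        rw [← hYz, hbr, ← Finset.sum_erase_add _ _ (Finset.mem_univ i)]
        abel
      rw [this]
      refine Submodule.sum_mem _ fun j hj => ?_
      exact Submodule.mem_iSup_of_mem j
        (Submodule.mem_iSup_of_mem (Finset.ne_of_mem_erase hj) (hmem j).1)
    have := (hindep i).le_bot ⟨h1, h2⟩
    rw [Submodule.mem_bot] at this
    exact sub_eq_zero.mp this
  exact ⟨y i, ⟨(hf i).1, (hf i).2⟩, hkey.symm⟩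
end

section
/- Let 𝔪 = 𝔪₋₁ ⊕ 𝔪₋₂ be a step 2 fundamental graded Lie algebra over ℝ, and let X₁ ∈ 𝔪₋₁ be an element at which the rank of ad X (X ∈ 𝔪₋₁) is maximal, i.e., rank(ad X₁) = max{rank(ad X) : X ∈ 𝔪₋₁}, where ad X : 𝔪₋₁ → 𝔪₋₂. Then ⁅ker(ad X₁), 𝔪₋₁⁆ ⊆ Im(ad X₁); that is, for every Y ∈ 𝔪₋₁ with ⁅X₁, Y⁆ = 0 and every Z ∈ 𝔪₋₁, there exists W ∈ 𝔪₋₁ with ⁅Y, Z⁆ = ⁅X₁, W⁆. -/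
/-- The rank of `ad X : 𝔪₋₁ → 𝔪₋₂`, i.e. the dimension of the image `⁅X, 𝔪₋₁⁆`. -/
noncomputable def adRank (L : Type*) [LieRing L] [LieAlgebra ℝ L]
    (m1 : Submodule ℝ L) (X : L) : ℕ :=
  Module.finrank ℝ ↥(m1.map (LieAlgebra.ad ℝ L X))

open Module LinearMap Submodule

lemma core_perturb {V W : Type*} [AddCommGroup V] [Module ℝ V]
    [AddCommGroup W] [Module ℝ W] [FiniteDimensional ℝ V] [FiniteDimensional ℝ W]
    (A E : V →ₗ[ℝ] W)
    (hrank : ∀ s : ℝ, finrank ℝ (range (A + s • E)) ≤ finrank ℝ (range A))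
    (y : V) (hy : A y = 0) : E y ∈ range A := by
  by_contra hEy
  set r := finrank ℝ ↥(range A) with hr
  -- a basis of the range of A, lifted to W, with preimages e i
  let b := finBasis ℝ ↥(range A)
  have hmem : ∀ i : Fin r, ((b i : W)) ∈ range A := fun i => (b i).2
  choose e he using fun i => hmem i
  -- the two families
  let a : Fin (r + 1) → W := Fin.snoc (fun i => (b i : W)) (E y)
  let c : Fin (r + 1) → W := Fin.snoc (fun i => E (e i)) 0
  -- span of the b i (as elements of W) is range A
  have hspan : span ℝ (Set.range fun i => ((b i : W))) = range A := by
    have : (fun i => ((b i : W))) = (range A).subtype ∘ b := rfl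
    rw [this, Set.range_comp, ← Submodule.map_span, b.span_eq, Submodule.map_top,
      range_subtype]
  -- linear independence at s = 0
  have h0 : LinearIndependent ℝ a := by
    rw [show a = Fin.snoc (fun i => ((b i : W))) (E y) from rfl, linearIndependent_fin_snoc]
    refine ⟨?_, by rw [hspan]; exact hEy⟩
    exact b.linearIndependent.map' (range A).subtype (ker_subtype _)
  -- transfer to a coordinate space to use openness
  let n := finrank ℝ W
  let φ : W ≃ₗ[ℝ] (Fin n → ℝ) := (finBasis ℝ W).equivFun
  have key : ∀ s : ℝ, LinearIndependent ℝ (fun i => φ (a i) + s • φ (c i)) →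
      LinearIndependent ℝ (fun i => a i + s • c i) := by
    intro s hs
    have : (fun i => φ (a i) + s • φ (c i)) = ⇑φ.toLinearMap ∘ (fun i => a i + s • c i) := by
      funext i; simp
    rw [this, LinearMap.linearIndependent_iff _ φ.ker] at hs
    exact hs
  -- openness
  have hopen : IsOpen {s : ℝ | LinearIndependent ℝ (fun i => φ (a i) + s • φ (c i))} := by
    have hc : Continuous fun s : ℝ => (fun i => φ (a i) + s • φ (c i)) := by
      apply continuous_pi
      intro i
      exact continuous_const.add (continuous_id.smul continuous_const)
    exact (isOpen_setOf_linearIndependent (𝕜 := ℝ)).preimage hc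
  have h0' : (0 : ℝ) ∈ {s : ℝ | LinearIndependent ℝ (fun i => φ (a i) + s • φ (c i))} := by
    have : (fun i => φ (a i) + (0:ℝ) • φ (c i)) = ⇑φ.toLinearMap ∘ a := by
      funext i; simp
    simp only [Set.mem_setOf_eq, this]
    rw [LinearMap.linearIndependent_iff _ φ.ker]
    exact h0
  -- find a nonzero s in the open set
  obtain ⟨ε, hε, hball⟩ := Metric.isOpen_iff.1 hopen 0 h0'
  set s : ℝ := ε / 2 with hs
  have hsne : s ≠ 0 := by positivity
  have hsmem : s ∈ {s : ℝ | LinearIndependent ℝ (fun i => φ (a i) + s • φ (c i))} := by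
    apply hball
    simp only [Metric.mem_ball, dist_zero_right, Real.norm_eq_abs, hs]
    rw [abs_of_pos (by positivity)]
    linarith
  have hli : LinearIndependent ℝ (fun i => a i + s • c i) := key s hsmem
  -- all the vectors a i + s • c i lie in range (A + s • E)
  have hmem' : ∀ i, a i + s • c i ∈ range (A + s • E) := by
    intro i
    refine Fin.lastCases ?_ ?_ i
    · show a (Fin.last r) + s • c (Fin.last r) ∈ _
      have ha : a (Fin.last r) = E y := by simp [a, Fin.snoc_last]
      have hc : c (Fin.last r) = 0 := by simp [c, Fin.snoc_last]
      rw [ha, hc, smul_zero, add_zero]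
      refine ⟨s⁻¹ • y, ?_⟩
      simp [hy, smul_smul, inv_mul_cancel₀ hsne]
    · intro i
      have ha : a i.castSucc = A (e i) := by simp [a, Fin.snoc_castSucc, he]
      have hc : c i.castSucc = E (e i) := by simp [c, Fin.snoc_castSucc]
      rw [ha, hc]
      exact ⟨e i, by simp⟩
  -- so finrank of range (A + s • E) is ≥ r + 1, contradiction
  let w : Fin (r + 1) → ↥(range (A + s • E)) := fun i => ⟨a i + s • c i, hmem' i⟩
  have hw : LinearIndependent ℝ w := by
    have : (fun i => a i + s • c i) = (range (A + s • E)).subtype ∘ w := rfl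
    rw [this] at hli
    exact hli.of_comp _
  have := hw.fintype_card_le_finrank
  simp only [Fintype.card_fin] at this
  have := hrank s
  omega

/-- If `X₁ ∈ 𝔪₋₁` is a point where the rank of `ad X` (`X ∈ 𝔪₋₁`) is maximal, then
`⁅ker (ad X₁), 𝔪₋₁⁆ ⊆ Im (ad X₁)`: for every `Y ∈ 𝔪₋₁` with `⁅X₁, Y⁆ = 0` and every
`Z ∈ 𝔪₋₁` there is `W ∈ 𝔪₋₁` with `⁅Y, Z⁆ = ⁅X₁, W⁆`. -/
theorem bracket_ker_subset_image_of_maxRank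
    (L : Type*) [LieRing L] [LieAlgebra ℝ L] [FiniteDimensional ℝ L]
    (m1 m2 : Submodule ℝ L) (h : IsStep2FGLA L m1 m2)
    (X₁ : L) (hX₁ : X₁ ∈ m1)
    (hmax : ∀ X ∈ m1, adRank L m1 X ≤ adRank L m1 X₁) :
    ∀ Y ∈ m1, ⁅X₁, Y⁆ = 0 → ∀ Z ∈ m1, ∃ W ∈ m1, ⁅Y, Z⁆ = ⁅X₁, W⁆ := by
  intro Y hY hYX Z hZ
  -- set A = ad X₁ ∘ incl, E = ad Z ∘ incl : ↥m1 →ₗ L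
  let A : ↥m1 →ₗ[ℝ] L := (LieAlgebra.ad ℝ L X₁).comp m1.subtype
  let E : ↥m1 →ₗ[ℝ] L := (LieAlgebra.ad ℝ L Z).comp m1.subtype
  have hrangeA : range A = m1.map (LieAlgebra.ad ℝ L X₁) := by
    rw [range_comp, range_subtype]
  have hAE : ∀ s : ℝ, A + s • E = (LieAlgebra.ad ℝ L (X₁ + s • Z)).comp m1.subtype := by
    intro s
    ext v
    simp [A, E, LieAlgebra.ad_apply, add_lie, smul_lie]
  have hrank : ∀ s : ℝ, finrank ℝ (range (A + s • E)) ≤ finrank ℝ (range A) := by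
    intro s
    rw [hAE s, hrangeA]
    have : range ((LieAlgebra.ad ℝ L (X₁ + s • Z)).comp m1.subtype)
        = m1.map (LieAlgebra.ad ℝ L (X₁ + s • Z)) := by
      rw [range_comp, range_subtype]
    rw [this]
    exact hmax _ (m1.add_mem hX₁ (m1.smul_mem s hZ))
  have hy : A ⟨Y, hY⟩ = 0 := by
    simp [A, LieAlgebra.ad_apply]
    exact hYX
  have := core_perturb A E hrank ⟨Y, hY⟩ hy
  rw [hrangeA] at this
  obtain ⟨w, hw, hww⟩ := this
  refine ⟨-w, m1.neg_mem hw, ?_⟩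
  have : ⁅Z, Y⁆ = ⁅X₁, w⁆ := by
    simpa [E, LieAlgebra.ad_apply] using hww.symm
  rw [lie_neg, ← this, ← lie_skew Y Z]
end

section
/- Let 𝔪 = 𝔪₋₁ ⊕ 𝔪₋₂ be a step 2 fundamental graded Lie algebra over ℝ such that max{rank(ad X) : X ∈ 𝔪₋₁} = 1, where ad X : 𝔪₋₁ → 𝔪₋₂. Then dim 𝔪₋₂ = 1; in particular, 𝔪₋₂ = Im(ad X₁) for any X₁ ∈ 𝔪₋₁ with rank(ad X₁) = 1, and 𝔪 is ad-surjective. -/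
/-- If `⁅u, p⁆ ≠ 0` and `rank (ad u) ≤ 1`, then every `⁅u, q⁆` is a multiple of `⁅u, p⁆`. -/
lemma adRank_key {L : Type*} [LieRing L] [LieAlgebra ℝ L] [FiniteDimensional ℝ L]
    {m1 : Submodule ℝ L} (hle : ∀ X ∈ m1, adRank L m1 X ≤ 1)
    {u p : L} (hu : u ∈ m1) (hp : p ∈ m1) (hw : ⁅u, p⁆ ≠ 0)
    {q : L} (hq : q ∈ m1) : ∃ t : ℝ, ⁅u, q⁆ = t • ⁅u, p⁆ := by
  have hmem : ⁅u, p⁆ ∈ m1.map (LieAlgebra.ad ℝ L u) := ⟨p, hp, by simp⟩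
  have hmem' : ⁅u, q⁆ ∈ m1.map (LieAlgebra.ad ℝ L u) := ⟨q, hq, by simp⟩
  have hsle : Submodule.span ℝ {⁅u, p⁆} ≤ m1.map (LieAlgebra.ad ℝ L u) := by
    rw [Submodule.span_singleton_le_iff_mem]; exact hmem
  have heq : Submodule.span ℝ {⁅u, p⁆} = m1.map (LieAlgebra.ad ℝ L u) := by
    apply Submodule.eq_of_le_of_finrank_le hsle
    calc Module.finrank ℝ ↥(m1.map (LieAlgebra.ad ℝ L u)) ≤ 1 := hle u hu
      _ = Module.finrank ℝ ↥(Submodule.span ℝ {⁅u, p⁆}) :=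
        (finrank_span_singleton hw).symm
  rw [← heq] at hmem'
  rcases Submodule.mem_span_singleton.mp hmem' with ⟨t, ht⟩
  exact ⟨t, ht.symm⟩

/-- Extracting coefficients from a proportionality relation between combinations of
two "independent" vectors. -/
lemma coeff_eq {L : Type*} [AddCommGroup L] [Module ℝ L] {Z b : L}
    (hind : ∀ s t : ℝ, s • Z + t • b = 0 → s = 0 ∧ t = 0)
    {α β α' β' t : ℝ} (h : α' • Z + β' • b = t • (α • Z + β • b)) :
    α' = t * α ∧ β' = t * β := by
  have h0 : (α' - t * α) • Z + (β' - t * β) • b = 0 := by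
    rw [smul_add, smul_smul, smul_smul] at h
    rw [sub_smul, sub_smul, sub_add_sub_comm, h, sub_self]
  obtain ⟨h1, h2⟩ := hind _ _ h0
  constructor <;> linarith [sub_eq_zero.mp h1, sub_eq_zero.mp h2]

/-- If the maximal rank of `ad X : 𝔪₋₁ → 𝔪₋₂` over `X ∈ 𝔪₋₁` equals `1`, then
`dim 𝔪₋₂ = 1`; in particular `𝔪₋₂ = Im (ad X₁)` for any `X₁ ∈ 𝔪₋₁` with
`rank (ad X₁) = 1`, and `𝔪` is ad-surjective. -/
theorem dim_m2_eq_one_of_maxRank_one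
    (L : Type*) [LieRing L] [LieAlgebra ℝ L] [FiniteDimensional ℝ L]
    (m1 m2 : Submodule ℝ L) (h : IsStep2FGLA L m1 m2)
    (hle : ∀ X ∈ m1, adRank L m1 X ≤ 1)
    (hex : ∃ X ∈ m1, adRank L m1 X = 1) :
    Module.finrank ℝ ↥m2 = 1 ∧
      (∀ X₁ ∈ m1, adRank L m1 X₁ = 1 → m1.map (LieAlgebra.ad ℝ L X₁) = m2) ∧
      (∃ X ∈ m1, ∀ z ∈ m2, ∃ Y ∈ m1, ⁅X, Y⁆ = z) := by
  obtain ⟨X, hX, hX1⟩ := hex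
  -- find Y ∈ m1 with Z := ⁅X, Y⁆ ≠ 0
  have hne : m1.map (LieAlgebra.ad ℝ L X) ≠ ⊥ := by
    intro hbot
    rw [adRank, hbot] at hX1
    simp at hX1
  obtain ⟨z, hz, hz0⟩ := Submodule.exists_mem_ne_zero_of_ne_bot hne
  obtain ⟨Y, hY, hYz⟩ := hz
  simp only [LieAlgebra.ad_apply] at hYz
  subst hYz
  set Z : L := ⁅X, Y⁆ with hZdef
  have hZ : Z ≠ 0 := hz0
  -- main claim: every bracket lies in span {Z}
  have key : ∀ x ∈ m1, ∀ y ∈ m1, ⁅x, y⁆ ∈ Submodule.span ℝ {Z} := by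
    intro x hx y hy
    by_contra hb
    set b : L := ⁅x, y⁆ with hbdef
    have hb0 : b ≠ 0 := by
      intro h0; rw [h0] at hb; exact hb (Submodule.zero_mem _)
    have hind : ∀ s t : ℝ, s • Z + t • b = 0 → s = 0 ∧ t = 0 := by
      intro s t hst
      by_cases ht : t = 0
      · subst ht
        simp only [zero_smul, add_zero, smul_eq_zero] at hst
        exact ⟨hst.resolve_right hZ, rfl⟩
      · exfalso
        apply hb
        have h1 : t • b = -(s • Z) := eq_neg_of_add_eq_zero_right hst
        have h2 : b = (-(t⁻¹ * s)) • Z := by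
          calc b = t⁻¹ • (t • b) := by rw [smul_smul, inv_mul_cancel₀ ht, one_smul]
            _ = t⁻¹ • (-(s • Z)) := by rw [h1]
            _ = (-(t⁻¹ * s)) • Z := by rw [smul_neg, smul_smul, neg_smul]
        rw [h2]
        exact Submodule.smul_mem _ _ (Submodule.mem_span_singleton_self Z)
    -- coefficients
    obtain ⟨e, he⟩ := adRank_key hle hx hy hb0 hY      -- ⁅x, Y⁆ = e • b
    obtain ⟨g, hg⟩ := adRank_key hle hx hy hb0 hX      -- ⁅x, X⁆ = g • b
    obtain ⟨c, hc⟩ := adRank_key hle hX hY hZ hy       -- ⁅X, y⁆ = c • Z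
    have hYX : ⁅Y, X⁆ = -Z := by rw [hZdef, ← lie_skew]
    have hYXne : ⁅Y, X⁆ ≠ 0 := by rw [hYX]; simpa using hZ
    obtain ⟨f', hf'⟩ := adRank_key hle hY hX hYXne hy  -- ⁅Y, y⁆ = f' • ⁅Y,X⁆ = (-f') • Z
    have hf : ⁅Y, y⁆ = (-f') • Z := by rw [hf', hYX]; simp
    set f : ℝ := -f' with hfdef
    -- relation 1 : u = X + x
    have hu1 : X + x ∈ m1 := m1.add_mem hX hx
    have hw1 : ⁅X + x, y⁆ = c • Z + (1 : ℝ) • b := by rw [add_lie, hc]; simp; rfl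
    have hw1ne : ⁅X + x, y⁆ ≠ 0 := by
      rw [hw1]; intro h0; exact one_ne_zero (hind c 1 h0).2
    obtain ⟨t1, ht1⟩ := adRank_key hle hu1 hy hw1ne hY
    have ht1' : ⁅X + x, Y⁆ = (1 : ℝ) • Z + e • b := by rw [add_lie, he]; simp; rfl
    rw [ht1', hw1] at ht1
    obtain ⟨r11, r12⟩ := coeff_eq hind ht1  -- 1 = t1 * c, e = t1 * 1
    -- relation 2 : u = Y + x
    have hu2 : Y + x ∈ m1 := m1.add_mem hY hx
    have hw2 : ⁅Y + x, y⁆ = f • Z + (1 : ℝ) • b := by rw [add_lie, hf]; simp; rfl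
    have hw2ne : ⁅Y + x, y⁆ ≠ 0 := by
      rw [hw2]; intro h0; exact one_ne_zero (hind f 1 h0).2
    obtain ⟨t2, ht2⟩ := adRank_key hle hu2 hy hw2ne hX
    have ht2' : ⁅Y + x, X⁆ = (-1 : ℝ) • Z + g • b := by rw [add_lie, hYX, hg]; simp; rfl
    rw [ht2', hw2] at ht2
    obtain ⟨r21, r22⟩ := coeff_eq hind ht2  -- -1 = t2 * f, g = t2 * 1
    -- relation 3 : u = X + Y + x
    have hu3 : X + Y + x ∈ m1 := m1.add_mem (m1.add_mem hX hY) hx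
    have hw3 : ⁅X + Y + x, Y⁆ = (1 : ℝ) • Z + e • b := by
      rw [add_lie, add_lie, he]; simp; rfl
    have hw3ne : ⁅X + Y + x, Y⁆ ≠ 0 := by
      rw [hw3]; intro h0; exact one_ne_zero (hind 1 e h0).1
    obtain ⟨t3, ht3⟩ := adRank_key hle hu3 hY hw3ne hX
    have ht3' : ⁅X + Y + x, X⁆ = (-1 : ℝ) • Z + g • b := by
      rw [add_lie, add_lie, hYX, hg]; simp; rfl
    rw [ht3', hw3] at ht3
    obtain ⟨r31, r32⟩ := coeff_eq hind ht3  -- -1 = t3 * 1, g = t3 * e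
    obtain ⟨t4, ht4⟩ := adRank_key hle hu3 hY hw3ne hy
    have ht4' : ⁅X + Y + x, y⁆ = (c + f) • Z + (1 : ℝ) • b := by
      rw [add_lie, add_lie, hc, hf, add_smul]; simp [hfdef]; rfl
    rw [ht4', hw3] at ht4
    obtain ⟨r41, r42⟩ := coeff_eq hind ht4  -- c + f = t4 * 1, 1 = t4 * e
    -- derive the contradiction
    have hce : c * e = 1 := by rw [r12, mul_one, mul_comm]; exact r11.symm
    have hfg : f * g = -1 := by rw [r22, mul_one, mul_comm]; exact r21.symm
    have ht3v : t3 = -1 := by linarith [r31]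
    have hge : g = -e := by rw [r32, ht3v]; ring
    have hfe : f * e = 1 := by rw [hge, mul_neg] at hfg; linarith [hfg]
    have ht4v : t4 = c + f := by linarith [r41]
    have hsum : (c + f) * e = 1 := by rw [← ht4v]; linarith [r42]
    rw [add_mul] at hsum
    linarith [hce, hfe, hsum]
  -- m2 = span {Z}
  have hZm2 : Z ∈ m2 := by
    rw [h.span_brackets]
    exact Submodule.subset_span ⟨X, hX, Y, hY, rfl⟩
  have hm2 : m2 = Submodule.span ℝ {Z} := by
    apply le_antisymm
    · rw [h.span_brackets]
      apply Submodule.span_le.mpr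
      rintro w ⟨a, ha, b, hb, rfl⟩
      exact key a ha b hb
    · rw [Submodule.span_singleton_le_iff_mem]; exact hZm2
  have hfr : Module.finrank ℝ ↥m2 = 1 := by
    rw [hm2]; exact finrank_span_singleton hZ
  have hpart2 : ∀ X₁ ∈ m1, adRank L m1 X₁ = 1 →
      m1.map (LieAlgebra.ad ℝ L X₁) = m2 := by
    intro X₁ hX₁ hrk
    have hmaple : m1.map (LieAlgebra.ad ℝ L X₁) ≤ m2 := by
      rintro w ⟨v, hv, rfl⟩
      simp only [LieAlgebra.ad_apply]
      rw [h.span_brackets]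
      exact Submodule.subset_span ⟨X₁, hX₁, v, hv, rfl⟩
    apply Submodule.eq_of_le_of_finrank_le hmaple
    rw [hfr]
    rw [adRank] at hrk
    omega
  refine ⟨hfr, hpart2, X, hX, ?_⟩
  intro w hw
  rw [← hpart2 X hX hX1] at hw
  obtain ⟨v, hv, hvw⟩ := hw
  exact ⟨v, hv, by simpa using hvw⟩
end

section
/- Fix nonzero real numbers β, δ, λ, and let 𝔪 be the 9-dimensional real Lie algebra with basis X₁, X₂, X₃, X₄, X₅, Y₁, Y₂, Y₃, Y₄ whose only nonzero brackets of basis elements (up to skew-symmetry) are ⁅X₁, Xᵢ⁆ = Y_{i−1} for i = 2, 3, 4, ⁅X₂, X₃⁆ = Y₄, ⁅X₂, X₅⁆ = β·Y₃, ⁅X₃, X₅⁆ = δ·Y₃, and ⁅X₄, X₅⁆ = λ·Y₃. Then, with 𝔪₋₁ := span{X₁, …, X₅} and 𝔪₋₂ := span{Y₁, …, Y₄}, 𝔪 is a step 2 fundamental graded Lie algebra with dim 𝔪₋₁ = 5 and dim 𝔪₋₂ = 4 such that 𝔪₋₁ ∩ Z(𝔪) = 0 and 𝔪 is NOT ad-surjective;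 in fact max{rank(ad X) : X ∈ 𝔪₋₁} = 3 < 4 = dim 𝔪₋₂. -/
/-- For nonzero reals `β`, `δ`, `λ`, the 9-dimensional real Lie algebra with basis
`X₁, …, X₅, Y₁, …, Y₄` and nonzero brackets (up to skew-symmetry)
`⁅X₁, Xᵢ⁆ = Y_{i-1}` (`i = 2, 3, 4`), `⁅X₂, X₃⁆ = Y₄`, `⁅X₂, X₅⁆ = β Y₃`,
`⁅X₃, X₅⁆ = δ Y₃`, `⁅X₄, X₅⁆ = λ Y₃`, graded by `𝔪₋₁ = span{X₁, …, X₅}` and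
`𝔪₋₂ = span{Y₁, …, Y₄}`, is a step 2 fundamental graded Lie algebra with
`dim 𝔪₋₁ = 5`, `dim 𝔪₋₂ = 4`, trivial intersection of `𝔪₋₁` with the center, which
is NOT ad-surjective: in fact `max {rank (ad X) : X ∈ 𝔪₋₁} = 3 < 4 = dim 𝔪₋₂`. -/
theorem counterexample_dim4_not_adSurjective
    (β δ lam : ℝ) (hβ : β ≠ 0) (hδ : δ ≠ 0) (hlam : lam ≠ 0)
    (L : Type*) [LieRing L] [LieAlgebra ℝ L]
    (B : Module.Basis (Fin 5 ⊕ Fin 4) ℝ L) (X : Fin 5 → L) (Y : Fin 4 → L)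
    (hX : ∀ i, X i = B (Sum.inl i)) (hY : ∀ j, Y j = B (Sum.inr j))
    (h12 : ⁅X 0, X 1⁆ = Y 0) (h13 : ⁅X 0, X 2⁆ = Y 1) (h14 : ⁅X 0, X 3⁆ = Y 2)
    (h15 : ⁅X 0, X 4⁆ = 0)
    (h23 : ⁅X 1, X 2⁆ = Y 3) (h24 : ⁅X 1, X 3⁆ = 0) (h25 : ⁅X 1, X 4⁆ = β • Y 2)
    (h34 : ⁅X 2, X 3⁆ = 0) (h35 : ⁅X 2, X 4⁆ = δ • Y 2)
    (h45 : ⁅X 3, X 4⁆ = lam • Y 2)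
    (hXY : ∀ i j, ⁅X i, Y j⁆ = 0) (hYY : ∀ i j, ⁅Y i, Y j⁆ = 0) :
    IsStep2FGLA L (Submodule.span ℝ (Set.range X)) (Submodule.span ℝ (Set.range Y)) ∧
      Module.finrank ℝ ↥(Submodule.span ℝ (Set.range X)) = 5 ∧
      Module.finrank ℝ ↥(Submodule.span ℝ (Set.range Y)) = 4 ∧
      (∀ x ∈ Submodule.span ℝ (Set.range X), (∀ y : L, ⁅x, y⁆ = 0) → x = 0) ∧
      ¬ (∃ Z ∈ Submodule.span ℝ (Set.range X),
          ∀ z ∈ Submodule.span ℝ (Set.range Y),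
            ∃ W ∈ Submodule.span ℝ (Set.range X), ⁅Z, W⁆ = z) ∧
      (∀ Z ∈ Submodule.span ℝ (Set.range X), adRank L (Submodule.span ℝ (Set.range X)) Z ≤ 3) ∧
      (∃ Z ∈ Submodule.span ℝ (Set.range X), adRank L (Submodule.span ℝ (Set.range X)) Z = 3) := by
  classical
  haveI : Module.Finite ℝ L := Module.Finite.of_basis B
  set m1 := Submodule.span ℝ (Set.range X) with hm1def
  set m2 := Submodule.span ℝ (Set.range Y) with hm2def
  have hXf : X = ⇑B ∘ Sum.inl := funext hX
  have hYf : Y = ⇑B ∘ Sum.inr := funext hY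
  have hXli : LinearIndependent ℝ X := by
    rw [hXf]; exact B.linearIndependent.comp Sum.inl Sum.inl_injective
  have hYli : LinearIndependent ℝ Y := by
    rw [hYf]; exact B.linearIndependent.comp Sum.inr Sum.inr_injective
  have hXm : ∀ i, X i ∈ m1 := fun i => Submodule.subset_span (Set.mem_range_self i)
  have hYm : ∀ j, Y j ∈ m2 := fun j => Submodule.subset_span (Set.mem_range_self j)
  -- reversed brackets
  have h21 : ⁅X 1, X 0⁆ = -Y 0 := by rw [← lie_skew, h12]
  have h31 : ⁅X 2, X 0⁆ = -Y 1 := by rw [← lie_skew, h13]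
  have h41 : ⁅X 3, X 0⁆ = -Y 2 := by rw [← lie_skew, h14]
  have h51 : ⁅X 4, X 0⁆ = 0 := by rw [← lie_skew, h15, neg_zero]
  have h32 : ⁅X 2, X 1⁆ = -Y 3 := by rw [← lie_skew, h23]
  have h42 : ⁅X 3, X 1⁆ = 0 := by rw [← lie_skew, h24, neg_zero]
  have h52 : ⁅X 4, X 1⁆ = -(β • Y 2) := by rw [← lie_skew, h25]
  have h43 : ⁅X 3, X 2⁆ = 0 := by rw [← lie_skew, h34, neg_zero]
  have h53 : ⁅X 4, X 2⁆ = -(δ • Y 2) := by rw [← lie_skew, h35]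
  have h54 : ⁅X 4, X 3⁆ = -(lam • Y 2) := by rw [← lie_skew, h45]
  -- bracket table membership
  have hsk : ∀ i j, ⁅X i, X j⁆ ∈ m2 → ⁅X j, X i⁆ ∈ m2 := by
    intro i j h
    rw [← lie_skew]
    exact Submodule.neg_mem _ h
  have hTT : ∀ i j, ⁅X i, X j⁆ ∈ m2 := by
    intro i j
    fin_cases i <;> fin_cases j <;>
        (try simp only [Fin.isValue, Fin.mk_one, Fin.zero_eta, Fin.reduceFinMk]) <;>
      first
      | simp
      | (rw [h12]; exact hYm 0)
      | (rw [h13]; exact hYm 1)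
      | (rw [h14]; exact hYm 2)
      | (rw [h15]; exact Submodule.zero_mem _)
      | (rw [h23]; exact hYm 3)
      | (rw [h24]; exact Submodule.zero_mem _)
      | (rw [h25]; exact Submodule.smul_mem _ _ (hYm 2))
      | (rw [h34]; exact Submodule.zero_mem _)
      | (rw [h35]; exact Submodule.smul_mem _ _ (hYm 2))
      | (rw [h45]; exact Submodule.smul_mem _ _ (hYm 2))
      | (apply hsk; rw [h12]; exact hYm 0)
      | (apply hsk; rw [h13]; exact hYm 1)
      | (apply hsk; rw [h14]; exact hYm 2)
      | (apply hsk; rw [h15]; exact Submodule.zero_mem _)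
      | (apply hsk; rw [h23]; exact hYm 3)
      | (apply hsk; rw [h24]; exact Submodule.zero_mem _)
      | (apply hsk; rw [h25]; exact Submodule.smul_mem _ _ (hYm 2))
      | (apply hsk; rw [h34]; exact Submodule.zero_mem _)
      | (apply hsk; rw [h35]; exact Submodule.smul_mem _ _ (hYm 2))
      | (apply hsk; rw [h45]; exact Submodule.smul_mem _ _ (hYm 2))
  -- brackets of m1 elements lie in m2
  have hbm2 : ∀ x ∈ m1, ∀ y ∈ m1, ⁅x, y⁆ ∈ m2 := by
    intro x hx y hy
    induction hx using Submodule.span_induction with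
    | mem a ha =>
      obtain ⟨i, rfl⟩ := ha
      induction hy using Submodule.span_induction with
      | mem b hb => obtain ⟨j, rfl⟩ := hb; exact hTT i j
      | zero => simp
      | add u v _ _ hu hv => rw [lie_add]; exact Submodule.add_mem _ hu hv
      | smul t u _ hu => rw [lie_smul]; exact Submodule.smul_mem _ _ hu
    | zero => simp
    | add u v _ _ hu hv => rw [add_lie]; exact Submodule.add_mem _ hu hv
    | smul t u _ hu => rw [smul_lie]; exact Submodule.smul_mem _ _ hu
  -- bracket m1 m2 = 0
  have hb12 : ∀ x ∈ m1, ∀ y ∈ m2, ⁅x, y⁆ = 0 := by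
    intro x hx y hy
    induction hx using Submodule.span_induction with
    | mem a ha =>
      obtain ⟨i, rfl⟩ := ha
      induction hy using Submodule.span_induction with
      | mem b hb => obtain ⟨j, rfl⟩ := hb; exact hXY i j
      | zero => simp
      | add u v _ _ hu hv => rw [lie_add, hu, hv, add_zero]
      | smul t u _ hu => rw [lie_smul, hu, smul_zero]
    | zero => simp
    | add u v _ _ hu hv => rw [add_lie, hu, hv, add_zero]
    | smul t u _ hu => rw [smul_lie, hu, smul_zero]
  -- bracket m2 m2 = 0
  have hb22 : ∀ x ∈ m2, ∀ y ∈ m2, ⁅x, y⁆ = 0 := by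
    intro x hx y hy
    induction hx using Submodule.span_induction with
    | mem a ha =>
      obtain ⟨i, rfl⟩ := ha
      induction hy using Submodule.span_induction with
      | mem b hb => obtain ⟨j, rfl⟩ := hb; exact hYY i j
      | zero => simp
      | add u v _ _ hu hv => rw [lie_add, hu, hv, add_zero]
      | smul t u _ hu => rw [lie_smul, hu, smul_zero]
    | zero => simp
    | add u v _ _ hu hv => rw [add_lie, hu, hv, add_zero]
    | smul t u _ hu => rw [smul_lie, hu, smul_zero]
  -- IsCompl
  have hsup : m1 ⊔ m2 = ⊤ := by
    rw [hm1def, hm2def, hXf, hYf, ← Submodule.span_union, ← Sum.range_eq, B.span_eq]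
  have hdisj : Disjoint m1 m2 := by
    have h := B.linearIndependent.disjoint_span_image
      (s := Set.range Sum.inl) (t := Set.range Sum.inr)
      Set.isCompl_range_inl_range_inr.disjoint
    rw [hm1def, hm2def, hXf, hYf, Set.range_comp, Set.range_comp]
    exact h
  have hcompl : IsCompl m1 m2 := ⟨hdisj, codisjoint_iff.mpr hsup⟩
  -- span of brackets
  have hspanbr : m2 = Submodule.span ℝ {z : L | ∃ x ∈ m1, ∃ y ∈ m1, ⁅x, y⁆ = z} := by
    apply le_antisymm
    · rw [hm2def]
      apply Submodule.span_le.mpr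
      rintro _ ⟨j, rfl⟩
      apply Submodule.subset_span
      fin_cases j <;>
          (try simp only [Fin.isValue, Fin.mk_one, Fin.zero_eta, Fin.reduceFinMk]) <;>
        first
        | exact ⟨X 0, hXm 0, X 1, hXm 1, h12⟩
        | exact ⟨X 0, hXm 0, X 2, hXm 2, h13⟩
        | exact ⟨X 0, hXm 0, X 3, hXm 3, h14⟩
        | exact ⟨X 1, hXm 1, X 2, hXm 2, h23⟩
    · apply Submodule.span_le.mpr
      rintro _ ⟨x, hx, y, hy, rfl⟩
      exact hbm2 x hx y hy
  have hFGLA : IsStep2FGLA L m1 m2 := ⟨hcompl, hspanbr, hb12, hb22⟩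
  -- dimensions
  have hdim1 : Module.finrank ℝ ↥m1 = 5 := by
    rw [hm1def]
    simpa using finrank_span_eq_card hXli
  have hdim2 : Module.finrank ℝ ↥m2 = 4 := by
    rw [hm2def]
    simpa using finrank_span_eq_card hYli
  -- bracket expansion
  have expand : ∀ (c : Fin 5 → ℝ) (j : Fin 5),
      ⁅∑ i, c i • X i, X j⁆ = ∑ i, c i • ⁅X i, X j⁆ := by
    intro c j
    rw [← lie_skew, ← LieAlgebra.ad_apply ℝ, map_sum, ← Finset.sum_neg_distrib]
    refine Finset.sum_congr rfl fun i _ => ?_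
    simp only [map_smul, LieAlgebra.ad_apply, smul_neg, ← lie_skew (X i), neg_neg]
  have hv0 : ∀ c : Fin 5 → ℝ, ⁅∑ i, c i • X i, X 0⁆ =
      (-(c 1)) • Y 0 + (-(c 2)) • Y 1 + (-(c 3)) • Y 2 + (0:ℝ) • Y 3 := by
    intro c
    rw [expand, Fin.sum_univ_five]
    simp only [lie_self, h21, h31, h41, h51, smul_zero, smul_neg]
    module
  have hv1 : ∀ c : Fin 5 → ℝ, ⁅∑ i, c i • X i, X 1⁆ =
      (c 0) • Y 0 + (0:ℝ) • Y 1 + (-(c 4 * β)) • Y 2 + (-(c 2)) • Y 3 := by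
    intro c
    rw [expand, Fin.sum_univ_five]
    simp only [lie_self, h12, h32, h42, h52, smul_zero, smul_neg]
    module
  have hv2 : ∀ c : Fin 5 → ℝ, ⁅∑ i, c i • X i, X 2⁆ =
      (0:ℝ) • Y 0 + (c 0) • Y 1 + (-(c 4 * δ)) • Y 2 + (c 1) • Y 3 := by
    intro c
    rw [expand, Fin.sum_univ_five]
    simp only [lie_self, h13, h23, h43, h53, smul_zero, smul_neg]
    module
  have hv3 : ∀ c : Fin 5 → ℝ, ⁅∑ i, c i • X i, X 3⁆ =
      (0:ℝ) • Y 0 + (0:ℝ) • Y 1 + (c 0 - c 4 * lam) • Y 2 + (0:ℝ) • Y 3 := by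
    intro c
    rw [expand, Fin.sum_univ_five]
    simp only [lie_self, h14, h24, h34, h54, smul_zero, smul_neg]
    module
  have hv4 : ∀ c : Fin 5 → ℝ, ⁅∑ i, c i • X i, X 4⁆ =
      (0:ℝ) • Y 0 + (0:ℝ) • Y 1 + (c 1 * β + c 2 * δ + c 3 * lam) • Y 2 + (0:ℝ) • Y 3 := by
    intro c
    rw [expand, Fin.sum_univ_five]
    simp only [lie_self, h15, h25, h35, h45, smul_zero]
    module
  -- coefficient extraction
  have hYind : ∀ a b d e : ℝ, a • Y 0 + b • Y 1 + d • Y 2 + e • Y 3 = 0 →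
      a = 0 ∧ b = 0 ∧ d = 0 ∧ e = 0 := by
    intro a b d e h
    have h' : ∑ i, (![a, b, d, e]) i • Y i = 0 := by
      rw [Fin.sum_univ_four]
      simpa using h
    have := Fintype.linearIndependent_iff.mp hYli ![a, b, d, e] h'
    exact ⟨this 0, this 1, this 2, this 3⟩
  -- trivial center intersection
  have hcenter : ∀ x ∈ m1, (∀ y : L, ⁅x, y⁆ = 0) → x = 0 := by
    intro x hx hzero
    rw [hm1def] at hx
    obtain ⟨c, rfl⟩ := (Submodule.mem_span_range_iff_exists_fun ℝ).mp hx
    have e0 := hzero (X 0); rw [hv0 c] at e0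
    have e1 := hzero (X 1); rw [hv1 c] at e1
    obtain ⟨k1, k2, k3, -⟩ := hYind _ _ _ _ e0
    obtain ⟨k0, -, k4, -⟩ := hYind _ _ _ _ e1
    have hc1 : c 1 = 0 := by linarith [neg_eq_zero.mp k1]
    have hc2 : c 2 = 0 := by linarith [neg_eq_zero.mp k2]
    have hc3 : c 3 = 0 := by linarith [neg_eq_zero.mp k3]
    have hc4 : c 4 = 0 := by
      have := neg_eq_zero.mp k4
      rcases mul_eq_zero.mp this with h | h
      · exact h
      · exact absurd h hβ
    rw [Fin.sum_univ_five, k0, hc1, hc2, hc3, hc4]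
    simp
  -- image of ad
  have himg : ∀ Z : L, m1.map (LieAlgebra.ad ℝ L Z) =
      Submodule.span ℝ (Set.range fun j => ⁅Z, X j⁆) := by
    intro Z
    rw [hm1def, Submodule.map_span, ← Set.range_comp]
    rfl
  -- rank ≤ 3
  have hrankle : ∀ Z ∈ m1, adRank L m1 Z ≤ 3 := by
    intro Z hZ
    rw [hm1def] at hZ
    obtain ⟨c, rfl⟩ := (Submodule.mem_span_range_iff_exists_fun ℝ).mp hZ
    set Z := ∑ i, c i • X i with hZdef
    have hbound : ∀ w : Fin 3 → L,
        Submodule.span ℝ (Set.range fun j => ⁅Z, X j⁆) ≤ Submodule.span ℝ (Set.range w) →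
        adRank L m1 Z ≤ 3 := by
      intro w hle
      unfold adRank
      rw [himg Z]
      refine le_trans (Submodule.finrank_mono hle) ?_
      simpa [Set.finrank] using finrank_range_le_card (R := ℝ) w
    by_cases hc0 : c 0 = 0
    · refine hbound ![⁅Z, X 0⁆, Y 2, Y 3] ?_
      have mw : ∀ i : Fin 3, (![⁅Z, X 0⁆, Y 2, Y 3]) i ∈
          Submodule.span ℝ (Set.range ![⁅Z, X 0⁆, Y 2, Y 3]) :=
        fun i => Submodule.subset_span (Set.mem_range_self i)
      have m0 := mw 0
      have mY2 : Y 2 ∈ Submodule.span ℝ (Set.range ![⁅Z, X 0⁆, Y 2, Y 3]) := by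
        simpa using mw 1
      have mY3 : Y 3 ∈ Submodule.span ℝ (Set.range ![⁅Z, X 0⁆, Y 2, Y 3]) := by
        simpa using mw 2
      apply Submodule.span_le.mpr
      rintro _ ⟨j, rfl⟩
      fin_cases j <;>
          (try simp only [Fin.isValue, Fin.mk_one, Fin.zero_eta, Fin.reduceFinMk]) <;>
        first
        | simpa using m0
        | (rw [hv1 c, hc0]
           simp only [zero_smul, zero_add, add_zero, neg_smul]
           exact Submodule.add_mem _ (Submodule.neg_mem _ (Submodule.smul_mem _ _ mY2))
             (Submodule.neg_mem _ (Submodule.smul_mem _ _ mY3)))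
        | (rw [hv2 c, hc0]
           simp only [zero_smul, zero_add, add_zero, neg_smul]
           exact Submodule.add_mem _ (Submodule.neg_mem _ (Submodule.smul_mem _ _ mY2))
             (Submodule.smul_mem _ _ mY3))
        | (rw [hv3 c]
           simp only [zero_smul, zero_add, add_zero]
           exact Submodule.smul_mem _ _ mY2)
        | (rw [hv4 c]
           simp only [zero_smul, zero_add, add_zero]
           exact Submodule.smul_mem _ _ mY2)
    · refine hbound ![⁅Z, X 1⁆, ⁅Z, X 2⁆, Y 2] ?_
      have mw : ∀ i : Fin 3, (![⁅Z, X 1⁆, ⁅Z, X 2⁆, Y 2]) i ∈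
          Submodule.span ℝ (Set.range ![⁅Z, X 1⁆, ⁅Z, X 2⁆, Y 2]) :=
        fun i => Submodule.subset_span (Set.mem_range_self i)
      have m0 := mw 0
      have m1' := mw 1
      have mY2 : Y 2 ∈ Submodule.span ℝ (Set.range ![⁅Z, X 1⁆, ⁅Z, X 2⁆, Y 2]) := by
        simpa using mw 2
      have key : ⁅Z, X 0⁆ = (-(c 1 / c 0)) • ⁅Z, X 1⁆ + (-(c 2 / c 0)) • ⁅Z, X 2⁆ +
          (-(c 3) - (c 1 * (c 4 * β) + c 2 * (c 4 * δ)) / c 0) • Y 2 := by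
        rw [hv0 c, hv1 c, hv2 c]
        match_scalars <;> (field_simp; try ring)
      apply Submodule.span_le.mpr
      rintro _ ⟨j, rfl⟩
      fin_cases j <;>
          (try simp only [Fin.isValue, Fin.mk_one, Fin.zero_eta, Fin.reduceFinMk]) <;>
        first
        | simpa using m0
        | simpa using m1'
        | (rw [key]
           exact Submodule.add_mem _
             (Submodule.add_mem _ (Submodule.smul_mem _ _ (by simpa using m0))
               (Submodule.smul_mem _ _ (by simpa using m1')))
             (Submodule.smul_mem _ _ mY2))
        | (rw [hv3 c]
           simp only [zero_smul, zero_add, add_zero]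
           exact Submodule.smul_mem _ _ mY2)
        | (rw [hv4 c]
           simp only [zero_smul, zero_add, add_zero]
           exact Submodule.smul_mem _ _ mY2)
  -- not ad-surjective
  have hnotsurj : ¬ (∃ Z ∈ m1, ∀ z ∈ m2, ∃ W ∈ m1, ⁅Z, W⁆ = z) := by
    rintro ⟨Z, hZ, hsurj⟩
    have hle : m2 ≤ m1.map (LieAlgebra.ad ℝ L Z) := by
      intro z hz
      obtain ⟨W, hW, hWz⟩ := hsurj z hz
      exact ⟨W, hW, by simpa [LieAlgebra.ad_apply] using hWz⟩
    have h4 : 4 ≤ adRank L m1 Z := by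
      unfold adRank
      calc 4 = Module.finrank ℝ ↥m2 := hdim2.symm
        _ ≤ _ := Submodule.finrank_mono hle
    have := hrankle Z hZ
    omega
  -- rank exactly 3 for X 0
  have hrank3 : adRank L m1 (X 0) = 3 := by
    show Module.finrank ℝ ↥(m1.map (LieAlgebra.ad ℝ L (X 0))) = 3
    rw [himg (X 0)]
    have hgli : LinearIndependent ℝ (Y ∘ Fin.castLE (by norm_num : 3 ≤ 4)) :=
      hYli.comp _ (Fin.castLE_injective _)
    have heq : Submodule.span ℝ (Set.range fun j => ⁅X 0, X j⁆) =
        Submodule.span ℝ (Set.range (Y ∘ Fin.castLE (by norm_num : 3 ≤ 4))) := by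
      apply le_antisymm
      · apply Submodule.span_le.mpr
        rintro _ ⟨j, rfl⟩
        fin_cases j <;>
            (try simp only [Fin.isValue, Fin.mk_one, Fin.zero_eta, Fin.reduceFinMk]) <;>
          first
          | (rw [lie_self]; exact Submodule.zero_mem _)
          | (rw [h15]; exact Submodule.zero_mem _)
          | (rw [h12]; exact Submodule.subset_span ⟨0, rfl⟩)
          | (rw [h13]; exact Submodule.subset_span ⟨1, rfl⟩)
          | (rw [h14]; exact Submodule.subset_span ⟨2, rfl⟩)
      · apply Submodule.span_le.mpr
        rintro _ ⟨i, rfl⟩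
        fin_cases i <;>
            (try simp only [Fin.isValue, Fin.mk_one, Fin.zero_eta, Fin.reduceFinMk]) <;>
          first
          | exact Submodule.subset_span ⟨1, h12⟩
          | exact Submodule.subset_span ⟨2, h13⟩
          | exact Submodule.subset_span ⟨3, h14⟩
    rw [heq]
    simpa using finrank_span_eq_card hgli
  exact ⟨hFGLA, hdim1, hdim2, hcenter, hnotsurj, hrankle, ⟨X 0, hXm 0, hrank3⟩⟩
end
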